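/- arXiv:2505.11395 — 2 statements merged into one kernel-verified Lean document; each statement's English description precedes it below -/
import Mathlib

section
/- Let A be a finite set with a conservative minority operation f, let n ≥ 3, let A₁,…,Aₙ ⊆ A be subsets such that each subalgebra (A_i;f) is subdirectly irreducible with monolith μ_i and nontrivial monolith block B_i, and let R ⊆ A₁ × ⋯ × Aₙ be a subdirect, functional, multisorted critical relation. Then: (1) |B_i| = 2 for every i; (2) there are bijections ℓ_i : B_i → {0,1} such that R ∩ (B₁ × ⋯ × Bₙ) = {(c₁,…,cₙ) ∈ B₁ × ⋯ × Bₙ : ℓ₁(c₁) + ⋯ + ℓₙ(cₙ) ≡ 1 (mod 2)}; (3) R is the disjoint union of R ∩ (B₁ × ⋯ × Bₙ) and R ∩ ((A₁\B₁) × ⋯ × (Aₙ\Bₙ)); (4) for all distinct i, j, the projection of R ∩ ((A₁\B₁) × ⋯ × (Aₙ\Bₙ)) onto coordinates (i,j) is the graph of a bijection between A_i\B_i and A_j\B_j; and (5) for all i, j there is a bijection g : A_i → A_j with g(f(x,y,z)) = f(g(x),g(y),g(z)) for all x,y,z ∈ A_i, i.e., (A_i;f) and (A_j;f) are isomorphic.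 -/
/-- `f` is a Maltsev operation. -/
def IsMaltsevOp {α : Type*} (f : α → α → α → α) : Prop :=
  ∀ x y : α, f x x y = y ∧ f y x x = y

/-- `f` is a minority operation. -/
def IsMinorityOp {α : Type*} (f : α → α → α → α) : Prop :=
  ∀ x y : α, f x x y = y ∧ f x y x = y ∧ f y x x = y

/-- `f` is conservative. -/
def IsConservativeOp {α : Type*} (f : α → α → α → α) : Prop :=
  ∀ x y z : α, f x y z = x ∨ f x y z = y ∨ f x y z = z

/-- `f` preserves the binary relation `θ`. -/
def PreservesRel {α : Type*} (f : α → α → α → α) (θ : α → α → Prop) : Prop :=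
  ∀ a₁ b₁ a₂ b₂ a₃ b₃ : α, θ a₁ b₁ → θ a₂ b₂ → θ a₃ b₃ →
    θ (f a₁ a₂ a₃) (f b₁ b₂ b₃)

/-- A congruence of the algebra `(α; f)`. -/
def IsCong {α : Type*} (f : α → α → α → α) (θ : α → α → Prop) : Prop :=
  Equivalence θ ∧ PreservesRel f θ

/-- A block congruence: a congruence with at most one nontrivial class. -/
def IsBlockCong {α : Type*} (f : α → α → α → α) (θ : α → α → Prop) : Prop :=
  IsCong f θ ∧ ∀ a b c d : α, θ a b → a ≠ b → θ c d → c ≠ d → θ a c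

/-- A relation is nontrivial if it relates two distinct elements. -/
def NontrivialRel {α : Type*} (θ : α → α → Prop) : Prop :=
  ∃ a b, θ a b ∧ a ≠ b

/-- Containment of binary relations. -/
def RelLE {α : Type*} (θ₁ θ₂ : α → α → Prop) : Prop :=
  ∀ x y, θ₁ x y → θ₂ x y

/-- An atomic congruence: a nontrivial congruence such that every nontrivial
congruence contained in it equals it. -/
def IsAtomicCong {α : Type*} (f : α → α → α → α) (θ : α → α → Prop) : Prop :=
  IsCong f θ ∧ NontrivialRel θ ∧
    ∀ θ' : α → α → Prop, IsCong f θ' → NontrivialRel θ' → RelLE θ' θ →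
      ∀ x y, θ' x y ↔ θ x y

/-- `(α; f)` is subdirectly irreducible: it has exactly one atomic congruence. -/
def IsSubdirectlyIrred {α : Type*} (f : α → α → α → α) : Prop :=
  ∃ θ : α → α → Prop, IsAtomicCong f θ ∧
    ∀ θ' : α → α → Prop, IsAtomicCong f θ' → ∀ x y, θ' x y ↔ θ x y
/-- An equivalence relation on the subset `B` preserved by `f`, i.e. a
congruence of the subalgebra `(B; f)`. -/
def IsCongOn {α : Type*} (f : α → α → α → α) (B : Set α)
    (θ : α → α → Prop) : Prop :=
  (∀ x y, θ x y → x ∈ B ∧ y ∈ B) ∧ (∀ x ∈ B, θ x x) ∧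
    (∀ x y, θ x y → θ y x) ∧ (∀ x y z, θ x y → θ y z → θ x z) ∧
    PreservesRel f θ

/-- An atomic congruence of the subalgebra `(B; f)`. -/
def IsAtomicCongOn {α : Type*} (f : α → α → α → α) (B : Set α)
    (θ : α → α → Prop) : Prop :=
  IsCongOn f B θ ∧ NontrivialRel θ ∧
    ∀ θ' : α → α → Prop, IsCongOn f B θ' → NontrivialRel θ' → RelLE θ' θ →
      ∀ x y, θ' x y ↔ θ x y

/-- The subalgebra `(B; f)` is subdirectly irreducible. -/
def IsSIOn {α : Type*} (f : α → α → α → α) (B : Set α) : Prop :=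
  ∃ μ : α → α → Prop, IsAtomicCongOn f B μ ∧
    ∀ μ' : α → α → Prop, IsAtomicCongOn f B μ' → ∀ x y, μ' x y ↔ μ x y

/-- `f` preserves the `n`-ary relation `R`. -/
def PreservesSet {α : Type*} (f : α → α → α → α) {n : ℕ}
    (R : Set (Fin n → α)) : Prop :=
  ∀ t₁ t₂ t₃, t₁ ∈ R → t₂ ∈ R → t₃ ∈ R →
    (fun i => f (t₁ i) (t₂ i) (t₃ i)) ∈ R

/-- Characterization of subdirect functional multisorted critical relations of
arity `n ≥ 3` over subdirectly irreducible subalgebras (with monoliths `μ i`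
and nontrivial monolith blocks `B i`) of a finite conservative minority
algebra. -/
theorem stmt_17 {α : Type*} [Fintype α] (f : α → α → α → α)
    (hcons : IsConservativeOp f) (hmin : IsMinorityOp f)
    (n : ℕ) (hn : 3 ≤ n) (A : Fin n → Set α)
    (μ : Fin n → α → α → Prop)
    (hμ : ∀ i, IsAtomicCongOn f (A i) (μ i))
    (hSI : ∀ i, ∀ μ' : α → α → Prop, IsAtomicCongOn f (A i) μ' →
        ∀ x y, μ' x y ↔ μ i x y)
    (B : Fin n → Set α)
    (hB : ∀ i, ∃ x y, x ≠ y ∧ μ i x y ∧ B i = {z | μ i x z})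
    (R : Set (Fin n → α))
    (hdom : ∀ t ∈ R, ∀ i, t i ∈ A i)
    (hinv : PreservesSet f R)
    (hsub : ∀ (i : Fin n), ∀ a ∈ A i, ∃ t ∈ R, t i = a)
    (hfun : ∀ t ∈ R, ∀ t' ∈ R, ∀ i : Fin n,
        (∀ j, j ≠ i → t j = t' j) → t = t')
    (s : Fin n → α) (hsdom : ∀ i, s i ∈ A i) (hs : s ∉ R)
    (hmax : ∀ S : Set (Fin n → α), (∀ t ∈ S, ∀ i, t i ∈ A i) →
        PreservesSet f S → R ⊂ S → s ∈ S)
    (happ : ∀ i : Fin n, ∃ t ∈ R, ∀ j, j ≠ i → t j = s j) :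
    (∀ i : Fin n, (B i).ncard = 2) ∧
    (∃ ℓ : Fin n → α → ZMod 2,
      (∀ i, Set.BijOn (ℓ i) (B i) (Set.univ : Set (ZMod 2))) ∧
      ∀ t : Fin n → α, (∀ i, t i ∈ B i) →
        (t ∈ R ↔ (∑ i, ℓ i (t i)) = 1)) ∧
    (∀ t ∈ R, (∀ i, t i ∈ B i) ∨ (∀ i, t i ∈ A i \ B i)) ∧
    (∀ i j : Fin n, i ≠ j →
      (∀ x ∈ A i \ B i, ∃ t ∈ R, (∀ m, t m ∈ A m \ B m) ∧ t i = x) ∧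
      (∀ t ∈ R, ∀ t' ∈ R, (∀ m, t m ∈ A m \ B m) → (∀ m, t' m ∈ A m \ B m) →
        (t i = t' i ↔ t j = t' j))) ∧
    (∀ i j : Fin n, ∃ g : α → α, Set.BijOn g (A i) (A j) ∧
      ∀ x ∈ A i, ∀ y ∈ A i, ∀ z ∈ A i,
        g (f x y z) = f (g x) (g y) (g z)) := by
  classical
  -- minority identities
  have hm1 : ∀ x y : α, f x x y = y := fun x y => (hmin x y).1
  have hm2 : ∀ x y : α, f x y x = y := fun x y => (hmin x y).2.1
  have hm3 : ∀ x y : α, f y x x = y := fun x y => (hmin x y).2.2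
  -- μ accessors
  have mudom : ∀ m x y, μ m x y → x ∈ A m ∧ y ∈ A m := fun m => (hμ m).1.1
  have murefl : ∀ m, ∀ x ∈ A m, μ m x x := fun m => (hμ m).1.2.1
  have musymm : ∀ m x y, μ m x y → μ m y x := fun m => (hμ m).1.2.2.1
  have mutrans : ∀ m x y z, μ m x y → μ m y z → μ m x z := fun m => (hμ m).1.2.2.2.1
  have mupres : ∀ m, PreservesRel f (μ m) := fun m => (hμ m).1.2.2.2.2
  -- conservativity closure
  have hAcl : ∀ (m : Fin n) x y z, x ∈ A m → y ∈ A m → z ∈ A m → f x y z ∈ A m := by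
    intro m x y z hx hy hz
    rcases hcons x y z with h | h | h <;> rw [h] <;> assumption
  -- third index
  have third : ∀ i j : Fin n, ∃ k, k ≠ i ∧ k ≠ j := by
    intro i j
    by_contra h
    push_neg at h
    have hsub' : (Finset.univ : Finset (Fin n)) ⊆ {i, j} := by
      intro k _
      simp only [Finset.mem_insert, Finset.mem_singleton]
      rcases eq_or_ne k i with h' | h'
      · exact Or.inl h'
      · exact Or.inr (h k h')
    have h1 := Finset.card_le_card hsub'
    have h2 : ({i, j} : Finset (Fin n)).card ≤ 2 := by
      have := Finset.card_insert_le i ({j} : Finset (Fin n))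
      simpa using this
    rw [Finset.card_univ, Fintype.card_fin] at h1
    omega
  -- the canonical companions of s
  choose r hrR hrs using happ
  set a : Fin n → α := fun i => r i i with ha_def
  have haA : ∀ m, a m ∈ A m := fun m => hdom (r m) (hrR m) m
  have has : ∀ m, a m ≠ s m := by
    intro m h
    apply hs
    have : r m = s := by
      funext l
      by_cases hl : l = m
      · subst hl; exact h
      · exact hrs m l hl
    rw [← this]
    exact hrR m
  -- F2 : every nontrivial congruence on A m relates s m and a m
  have key_pair : ∀ (m : Fin n) (δ : α → α → Prop), IsCongOn f (A m) δ →
      NontrivialRel δ → δ (s m) (a m) := by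
    intro m δ hδ hnt
    obtain ⟨hdomδ, hreflδ, hsymmδ, htransδ, hpresδ⟩ := hδ
    set T : Set (Fin n → α) := {t | ∃ w, w ∈ R ∧ (∀ l, l ≠ m → t l = w l) ∧ δ (t m) (w m)} with hT
    have hTdom : ∀ t ∈ T, ∀ l, t l ∈ A l := by
      rintro t ⟨w, hwR, hagr, hδt⟩ l
      by_cases hl : l = m
      · subst hl; exact (hdomδ _ _ hδt).1
      · rw [hagr l hl]; exact hdom w hwR l
    have hTpres : PreservesSet f T := by
      rintro t₁ t₂ t₃ ⟨w₁, hw₁, ha₁, hb₁⟩ ⟨w₂, hw₂, ha₂, hb₂⟩ ⟨w₃, hw₃, ha₃, hb₃⟩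
      refine ⟨fun l => f (w₁ l) (w₂ l) (w₃ l), hinv _ _ _ hw₁ hw₂ hw₃, ?_, ?_⟩
      · intro l hl; dsimp only; rw [ha₁ l hl, ha₂ l hl, ha₃ l hl]
      · exact hpresδ _ _ _ _ _ _ hb₁ hb₂ hb₃
    have hRT : R ⊆ T := by
      intro t htR
      exact ⟨t, htR, fun l _ => rfl, hreflδ _ (hdom t htR m)⟩
    have hstrict : R ⊂ T := by
      rw [Set.ssubset_iff_of_subset hRT]
      obtain ⟨c, d, hcd, hne⟩ := hnt
      obtain ⟨rc, hrcR, hrci⟩ := hsub m c (hdomδ _ _ hcd).1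
      refine ⟨Function.update rc m d, ⟨rc, hrcR, ?_, ?_⟩, ?_⟩
      · intro l hl; exact Function.update_of_ne hl d rc
      · rw [Function.update_self, hrci]; exact hsymmδ _ _ hcd
      · intro hmem
        have := hfun _ hmem rc hrcR m (fun l hl => Function.update_of_ne hl d rc)
        have h2 := congrFun this m
        rw [Function.update_self, hrci] at h2
        exact hne h2.symm
    obtain ⟨w, hwR, hagr, hδs⟩ := hmax T hTdom hTpres hstrict
    have hw : w = r m := by
      apply hfun w hwR (r m) (hrR m) m
      intro l hl
      rw [← hagr l hl, hrs m l hl]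
    rw [hw] at hδs
    exact hδs
  have mu_pair : ∀ m, μ m (s m) (a m) := fun m => key_pair m (μ m) (hμ m).1 (hμ m).2.1
  -- F3 : μ m is the minimum nontrivial congruence
  have mu_min : ∀ (m : Fin n) (δ : α → α → Prop), IsCongOn f (A m) δ →
      NontrivialRel δ → ∀ x y, μ m x y → δ x y := by
    intro m δ hδ hnt x y hxy
    obtain ⟨hdomδ, hreflδ, hsymmδ, htransδ, hpresδ⟩ := hδ
    set δ₀ : α → α → Prop := fun x y => δ x y ∧ μ m x y with hδ₀
    have hcong : IsCongOn f (A m) δ₀ := by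
      refine ⟨fun x y h => hdomδ x y h.1, fun x hx => ⟨hreflδ x hx, murefl m x hx⟩,
        fun x y h => ⟨hsymmδ _ _ h.1, musymm m _ _ h.2⟩,
        fun x y z h h' => ⟨htransδ _ _ _ h.1 h'.1, mutrans m _ _ _ h.2 h'.2⟩, ?_⟩
      intro a₁ b₁ a₂ b₂ a₃ b₃ h1 h2 h3
      exact ⟨hpresδ _ _ _ _ _ _ h1.1 h2.1 h3.1, mupres m _ _ _ _ _ _ h1.2 h2.2 h3.2⟩
    have hntr : NontrivialRel δ₀ :=
      ⟨s m, a m, ⟨key_pair m δ ⟨hdomδ, hreflδ, hsymmδ, htransδ, hpresδ⟩ hnt, mu_pair m⟩,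
        fun h => has m h.symm⟩
    have hle : RelLE δ₀ (μ m) := fun _ _ h => h.2
    exact (((hμ m).2.2 δ₀ hcong hntr hle x y).mpr hxy).1
  -- The minimal invariant set containing R and s
  set S : Set (Fin n → α) :=
      {t | ∀ T : Set (Fin n → α), (∀ w ∈ T, ∀ l, w l ∈ A l) → PreservesSet f T →
        (∀ w ∈ R, w ∈ T) → s ∈ T → t ∈ T} with hS_def
  have hRS : ∀ t ∈ R, t ∈ S := fun t ht => fun T _ _ hRT _ => hRT t ht
  have hsS : s ∈ S := fun T _ _ _ hsT => hsT
  have hSdom : ∀ t ∈ S, ∀ l, t l ∈ A l := by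
    intro t ht
    exact ht {w | ∀ l, w l ∈ A l} (fun w hw => hw)
      (fun t₁ t₂ t₃ h1 h2 h3 l => hAcl l _ _ _ (h1 l) (h2 l) (h3 l))
      (fun w hw => hdom w hw) hsdom
  have hSpres : ∀ t₁ t₂ t₃, t₁ ∈ S → t₂ ∈ S → t₃ ∈ S →
      (fun l => f (t₁ l) (t₂ l) (t₃ l)) ∈ S := by
    intro t₁ t₂ t₃ h1 h2 h3 T hTdom hTpres hRT hsT
    exact hTpres _ _ _ (h1 T hTdom hTpres hRT hsT) (h2 T hTdom hTpres hRT hsT)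
      (h3 T hTdom hTpres hRT hsT)
  -- F6 : companions of elements of S
  have hcmpS : ∀ t ∈ S, ∀ m, ∃ w, w ∈ R ∧ (∀ l, l ≠ m → t l = w l) ∧ μ m (t m) (w m) := by
    intro t ht m
    refine ht {v | ∃ w, w ∈ R ∧ (∀ l, l ≠ m → v l = w l) ∧ μ m (v m) (w m)} ?_ ?_ ?_ ?_
    · rintro v ⟨w, hwR, hagr, hμv⟩ l
      by_cases hl : l = m
      · rw [hl]; exact (mudom m _ _ hμv).1
      · rw [hagr l hl]; exact hdom w hwR l
    · rintro t₁ t₂ t₃ ⟨w₁, hw₁, ha₁, hb₁⟩ ⟨w₂, hw₂, ha₂, hb₂⟩ ⟨w₃, hw₃, ha₃, hb₃⟩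
      refine ⟨fun l => f (w₁ l) (w₂ l) (w₃ l), hinv _ _ _ hw₁ hw₂ hw₃, ?_,
        mupres m _ _ _ _ _ _ hb₁ hb₂ hb₃⟩
      intro l hl; dsimp only; rw [ha₁ l hl, ha₂ l hl, ha₃ l hl]
    · intro w hw
      exact ⟨w, hw, fun l _ => rfl, murefl m _ (hdom w hw m)⟩
    · exact ⟨r m, hrR m, fun l hl => (hrs m l hl).symm, mu_pair m⟩
  -- θ : the fiber relation equals μ
  have theta_mu : ∀ (m : Fin n) x y,
      (∃ t u, t ∈ S ∧ u ∈ S ∧ (∀ l, l ≠ m → t l = u l) ∧ t m = x ∧ u m = y) → μ m x y := by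
    rintro m x y ⟨t, u, htS, huS, hagr, htm, hum⟩
    obtain ⟨w, hwR, hwa, hwμ⟩ := hcmpS t htS m
    obtain ⟨w', hw'R, hw'a, hw'μ⟩ := hcmpS u huS m
    have hww' : w = w' := by
      apply hfun w hwR w' hw'R m
      intro l hl
      rw [← hwa l hl, hagr l hl, hw'a l hl]
    subst htm; subst hum
    exact mutrans m _ _ _ hwμ (musymm m _ _ (hww' ▸ hw'μ))
  have mu_theta : ∀ (m : Fin n) x y, μ m x y →
      ∃ t u, t ∈ S ∧ u ∈ S ∧ (∀ l, l ≠ m → t l = u l) ∧ t m = x ∧ u m = y := by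
    intro m x y hxy
    set θ : α → α → Prop := fun x y =>
      ∃ t u, t ∈ S ∧ u ∈ S ∧ (∀ l, l ≠ m → t l = u l) ∧ t m = x ∧ u m = y with hθdef
    have hcong : IsCongOn f (A m) θ := by
      refine ⟨?_, ?_, ?_, ?_, ?_⟩
      · rintro x y ⟨t, u, htS, huS, hagr, htm, hum⟩
        exact ⟨htm ▸ hSdom t htS m, hum ▸ hSdom u huS m⟩
      · intro x hx
        obtain ⟨w, hwR, hwm⟩ := hsub m x hx
        exact ⟨w, w, hRS w hwR, hRS w hwR, fun l _ => rfl, hwm, hwm⟩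
      · rintro x y ⟨t, u, htS, huS, hagr, htm, hum⟩
        exact ⟨u, t, huS, htS, fun l hl => (hagr l hl).symm, hum, htm⟩
      · rintro x y z ⟨t, u, htS, huS, hagr, htm, hum⟩ ⟨t', u', ht'S, hu'S, hagr', ht'm, hu'm⟩
        refine ⟨fun l => f (t l) (u l) (t' l), u', hSpres _ _ _ htS huS ht'S, hu'S, ?_, ?_, hu'm⟩
        · intro l hl
          dsimp only
          rw [hagr l hl, hm1, hagr' l hl]
        · dsimp only
          rw [htm, hum, ht'm, hm3]
      · rintro a₁ b₁ a₂ b₂ a₃ b₃ ⟨t₁, u₁, h₁⟩ ⟨t₂, u₂, h₂⟩ ⟨t₃, u₃, h₃⟩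
        refine ⟨fun l => f (t₁ l) (t₂ l) (t₃ l), fun l => f (u₁ l) (u₂ l) (u₃ l),
          hSpres _ _ _ h₁.1 h₂.1 h₃.1, hSpres _ _ _ h₁.2.1 h₂.2.1 h₃.2.1, ?_, ?_, ?_⟩
        · intro l hl
          dsimp only
          rw [h₁.2.2.1 l hl, h₂.2.2.1 l hl, h₃.2.2.1 l hl]
        · dsimp only
          rw [h₁.2.2.2.1, h₂.2.2.2.1, h₃.2.2.2.1]
        · dsimp only
          rw [h₁.2.2.2.2, h₂.2.2.2.2, h₃.2.2.2.2]
    have hntr : NontrivialRel θ := by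
      refine ⟨s m, a m, ⟨s, r m, hsS, hRS _ (hrR m), fun l hl => (hrs m l hl).symm, rfl, rfl⟩,
        fun h => has m h.symm⟩
    exact mu_min m θ hcong hntr x y hxy
  -- fiber absorption
  have absorb : ∀ (m : Fin n) u, u ∈ S → ∀ x, μ m x (u m) → Function.update u m x ∈ S := by
    intro m u huS x hx
    obtain ⟨t, u', htS, hu'S, hagr, htm, hu'm⟩ := mu_theta m x (u m) hx
    have : Function.update u m x = fun l => f (t l) (u' l) (u l) := by
      funext l
      by_cases hl : l = m
      · subst hl
        rw [Function.update_self, htm, hu'm, hm3]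
      · rw [Function.update_of_ne hl, hagr l hl, hm1]
    rw [this]
    exact hSpres _ _ _ htS hu'S huS
  -- every μ-class that touches a tuple of S∖R has exactly two elements
  have class_eq : ∀ (i : Fin n) (u : Fin n → α), u ∈ S → u ∉ R →
      ∀ w, w ∈ R → (∀ l, l ≠ i → u l = w l) → ∀ z, μ i z (u i) → z = u i ∨ z = w i := by
    intro i u huS huR ru hruR hruA z hz
    by_contra hcon
    push_neg at hcon
    obtain ⟨hz1, hz2⟩ := hcon
    obtain ⟨j, hji, -⟩ := third i i
    obtain ⟨k, hki, hkj⟩ := third i j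
    have hji' : i ≠ j := Ne.symm hji
    have hki' : i ≠ k := Ne.symm hki
    have hkj' : j ≠ k := Ne.symm hkj
    obtain ⟨cu, hcuR, hcuA, hcuμ⟩ := hcmpS u huS k
    have hak : cu k ≠ u k := by
      intro h
      apply huR
      have : u = cu := by
        funext l
        by_cases hl : l = k
        · rw [hl, h]
        · exact hcuA l hl
      rw [this]; exact hcuR
    have huzS : Function.update u i z ∈ S := absorb i u huS z hz
    obtain ⟨cj, hcjR, hcjA, hcjμ⟩ := hcmpS _ huzS j
    have hcjμ' : μ j (u j) (cj j) := by rwa [Function.update_of_ne hji] at hcjμ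
    have hubzS : Function.update u j (cj j) ∈ S := absorb j u huS _ (musymm j _ _ hcjμ')
    obtain ⟨cb, hcbR, hcbA, -⟩ := hcmpS _ hubzS k
    obtain ⟨pz, hpzR, hpzA, -⟩ := hcmpS _ huzS k
    -- coordinates
    have hcji : cj i = z := by
      have h := hcjA i hji'
      rw [Function.update_self] at h
      exact h.symm
    have hcjk : cj k = u k := by
      have h := hcjA k hkj
      rw [Function.update_of_ne hki] at h
      exact h.symm
    have hcjl : ∀ l, l ≠ j → l ≠ i → cj l = u l := by
      intro l hlj hli
      have h := hcjA l hlj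
      rw [Function.update_of_ne hli] at h
      exact h.symm
    have hcbi : cb i = u i := by
      have h := hcbA i hki'
      rw [Function.update_of_ne hji'] at h
      exact h.symm
    have hcbj : cb j = cj j := by
      have h := hcbA j hkj'
      rw [Function.update_self] at h
      exact h.symm
    have hcbl : ∀ l, l ≠ k → l ≠ j → cb l = u l := by
      intro l hlk hlj
      have h := hcbA l hlk
      rw [Function.update_of_ne hlj] at h
      exact h.symm
    have hcul : ∀ l, l ≠ k → cu l = u l := fun l hlk => (hcuA l hlk).symm
    have hpzi : pz i = z := by
      have h := hpzA i hki'
      rw [Function.update_self] at h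
      exact h.symm
    have hpzl : ∀ l, l ≠ k → l ≠ i → pz l = u l := by
      intro l hlk hli
      have h := hpzA l hlk
      rw [Function.update_of_ne hli] at h
      exact h.symm
    -- first combination
    have hw1R : (fun l => f (cj l) (cb l) (cu l)) ∈ R := hinv _ _ _ hcjR hcbR hcuR
    have hw1pz : (fun l => f (cj l) (cb l) (cu l)) = pz := by
      apply hfun _ hw1R pz hpzR k
      intro l hlk
      by_cases hli : l = i
      · rw [hli, hcji, hcbi, hcul i hki', hpzi, hm3]
      · by_cases hlj : l = j
        · rw [hlj, hcbj, hm1, hcul j hkj', hpzl j hkj' hji]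
        · rw [hcjl l hlj hli, hcbl l hlk hlj, hcul l hlk, hm1, hpzl l hlk hli]
    have hE1 : f (u k) (cb k) (cu k) = pz k := by
      have h := congrFun hw1pz k
      rwa [hcjk] at h
    have hne1 : pz k ≠ cu k := by
      intro h
      have heq : pz = cu := by
        apply hfun pz hpzR cu hcuR i
        intro l hli
        by_cases hlk : l = k
        · rw [hlk, h]
        · rw [hpzl l hlk hli, hcul l hlk]
      have h2 := congrFun heq i
      rw [hpzi, hcul i hki'] at h2
      exact hz1 h2
    have hne2 : pz k ≠ u k := by
      intro h
      have heq : pz = ru := by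
        apply hfun pz hpzR ru hruR i
        intro l hli
        by_cases hlk : l = k
        · rw [hlk, h]; exact hruA k hki
        · rw [hpzl l hlk hli]; exact hruA l hli
      have h2 := congrFun heq i
      rw [hpzi] at h2
      exact hz2 h2
    have hgz : pz k = cb k := by
      rcases hcons (u k) (cb k) (cu k) with h | h | h
      · exact absurd (hE1.symm.trans h) hne2
      · exact hE1.symm.trans h
      · exact absurd (hE1.symm.trans h) hne1
    -- second combination
    have hw2R : (fun l => f (cj l) (cb l) (pz l)) ∈ R := hinv _ _ _ hcjR hcbR hpzR
    have hw2cu : (fun l => f (cj l) (cb l) (pz l)) = cu := by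
      apply hfun _ hw2R cu hcuR k
      intro l hlk
      by_cases hli : l = i
      · rw [hli, hcji, hcbi, hpzi, hm2, hcul i hki']
      · by_cases hlj : l = j
        · rw [hlj, hcbj, hm1, hpzl j hkj' hji, hcul j hkj']
        · rw [hcjl l hlj hli, hcbl l hlk hlj, hpzl l hlk hli, hm1, hcul l hlk]
    have hfin := congrFun hw2cu k
    rw [hcjk, hgz, hm3] at hfin
    exact hak hfin.symm
  -- each μ-class has at most two elements
  have mu_class2 : ∀ (m : Fin n) x y, μ m x y → x ≠ y → ∀ z, μ m x z → z = x ∨ z = y := by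
    intro m x y hxy hne z hxz
    obtain ⟨t, u, htS, huS, hagr, htm, hum⟩ := mu_theta m x y hxy
    by_cases htR : t ∈ R
    · by_cases huR : u ∈ R
      · exact absurd (by rw [← htm, ← hum, hfun t htR u huR m hagr]) hne
      · obtain ⟨w, hwR, hwa, hwμ⟩ := hcmpS u huS m
        have hce := class_eq m u huS huR w hwR hwa
        have hxw : x = w m := by
          rcases hce x (by rw [hum]; exact hxy) with h | h
          · exact absurd (h.trans hum) hne
          · exact h
        rcases hce z (by rw [hum]; exact mutrans m _ _ _ (musymm m _ _ hxz) hxy) with h | h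
        · right; rw [h, hum]
        · left; rw [h, ← hxw]
    · obtain ⟨w, hwR, hwa, hwμ⟩ := hcmpS t htS m
      have hce := class_eq m t htS htR w hwR hwa
      have hyw : y = w m := by
        rcases hce y (by rw [htm]; exact musymm m _ _ hxy) with h | h
        · exact absurd (h.trans htm).symm hne
        · exact h
      rcases hce z (by rw [htm]; exact musymm m _ _ hxz) with h | h
      · left; rw [h, htm]
      · right; rw [h, ← hyw]
  -- uniqueness of the nontrivial block: every nontrivial μ-pair is {s m, a m}
  have mu_nt : ∀ (m : Fin n) x y, μ m x y → x ≠ y →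
      (x = s m ∧ y = a m) ∨ (x = a m ∧ y = s m) := by
    intro m c c' hcc' hnecc
    have hcA : c ∈ A m := (mudom m _ _ hcc').1
    have hc'A : c' ∈ A m := (mudom m _ _ hcc').2
    set δ : α → α → Prop := fun x y => (x ∈ A m ∧ x = y) ∨ ((x = c ∨ x = c') ∧ (y = c ∨ y = c'))
      with hδdef
    have hmem : ∀ x, (x = c ∨ x = c') → x ∈ A m := by rintro x (rfl | rfl) <;> assumption
    have hmuP : ∀ x y, (x = c ∨ x = c') → (y = c ∨ y = c') → μ m x y := by
      rintro x y (rfl | rfl) (rfl | rfl)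
      · exact murefl m _ hcA
      · exact hcc'
      · exact musymm m _ _ hcc'
      · exact murefl m _ hc'A
    have class2c : ∀ z, μ m c z → z = c ∨ z = c' := mu_class2 m c c' hcc' hnecc
    have class2c' : ∀ z, μ m c' z → z = c' ∨ z = c :=
      mu_class2 m c' c (musymm m _ _ hcc') (Ne.symm hnecc)
    have hcong : IsCongOn f (A m) δ := by
      refine ⟨?_, ?_, ?_, ?_, ?_⟩
      · rintro x y (⟨hx, rfl⟩ | ⟨hx, hy⟩)
        · exact ⟨hx, hx⟩
        · exact ⟨hmem x hx, hmem y hy⟩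
      · intro x hx; exact Or.inl ⟨hx, rfl⟩
      · rintro x y (⟨hx, rfl⟩ | ⟨hx, hy⟩)
        · exact Or.inl ⟨hx, rfl⟩
        · exact Or.inr ⟨hy, hx⟩
      · rintro x y z (⟨hx, rfl⟩ | ⟨hx, hy⟩) h2
        · exact h2
        · rcases h2 with ⟨hy', rfl⟩ | ⟨hy', hz⟩
          · exact Or.inr ⟨hx, hy⟩
          · exact Or.inr ⟨hx, hz⟩
      · intro a₁ b₁ a₂ b₂ a₃ b₃ h1 h2 h3
        have hsplit : ∀ x y, δ x y → (x ∈ A m ∧ y ∈ A m) ∧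
            (x = y ∨ ((x = c ∨ x = c') ∧ (y = c ∨ y = c'))) := by
          rintro x y (⟨hx, rfl⟩ | ⟨hx, hy⟩)
          · exact ⟨⟨hx, hx⟩, Or.inl rfl⟩
          · exact ⟨⟨hmem x hx, hmem y hy⟩, Or.inr ⟨hx, hy⟩⟩
        obtain ⟨⟨ha1, hb1⟩, hp1⟩ := hsplit _ _ h1
        obtain ⟨⟨ha2, hb2⟩, hp2⟩ := hsplit _ _ h2
        obtain ⟨⟨ha3, hb3⟩, hp3⟩ := hsplit _ _ h3
        have hμ1 : μ m a₁ b₁ := by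
          rcases hp1 with rfl | ⟨u1, v1⟩
          exacts [murefl m _ ha1, hmuP _ _ u1 v1]
        have hμ2 : μ m a₂ b₂ := by
          rcases hp2 with rfl | ⟨u2, v2⟩
          exacts [murefl m _ ha2, hmuP _ _ u2 v2]
        have hμ3 : μ m a₃ b₃ := by
          rcases hp3 with rfl | ⟨u3, v3⟩
          exacts [murefl m _ ha3, hmuP _ _ u3 v3]
        have hμv : μ m (f a₁ a₂ a₃) (f b₁ b₂ b₃) := mupres m _ _ _ _ _ _ hμ1 hμ2 hμ3
        have hvA : f a₁ a₂ a₃ ∈ A m := hAcl m _ _ _ ha1 ha2 ha3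
        by_cases hvv : f a₁ a₂ a₃ = f b₁ b₂ b₃
        · exact Or.inl ⟨hvA, hvv⟩
        have hkey : (f a₁ a₂ a₃ = c ∨ f a₁ a₂ a₃ = c') ∨
            (f b₁ b₂ b₃ = c ∨ f b₁ b₂ b₃ = c') := by
          by_contra hcon
          push_neg at hcon
          obtain ⟨⟨hv1, hv2⟩, hv3, hv4⟩ := hcon
          apply hvv
          -- the value of f a is one of its args, at a position with an equal pair
          have heqa : ∀ p q : α, f a₁ a₂ a₃ = p →
              (p = q ∨ ((p = c ∨ p = c') ∧ (q = c ∨ q = c'))) → p = q := by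
            intro p q hv hpq
            rcases hpq with h | ⟨hp, hq⟩
            · exact h
            · rcases hp with rfl | rfl
              · exact absurd hv hv1
              · exact absurd hv hv2
          have heqb : ∀ p q : α, f b₁ b₂ b₃ = q →
              (p = q ∨ ((p = c ∨ p = c') ∧ (q = c ∨ q = c'))) → p = q := by
            intro p q hv hpq
            rcases hpq with h | ⟨hp, hq⟩
            · exact h
            · rcases hq with rfl | rfl
              · exact absurd hv hv3
              · exact absurd hv hv4
          have hmid : ∀ e : α, e ∈ A m → μ m (f a₁ a₂ a₃) e →
              (e = c ∨ e = c') → False := by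
            intro e heA hμe he
            rcases he with rfl | rfl
            · rcases class2c _ (musymm m _ _ hμe) with h | h
              · exact hv1 h
              · exact hv2 h
            · rcases class2c' _ (musymm m _ _ hμe) with h | h
              · exact hv2 h
              · exact hv1 h
          -- case on positions
          rcases hcons a₁ a₂ a₃ with hva | hva | hva <;>
            rcases hcons b₁ b₂ b₃ with hvb | hvb | hvb
          · -- (1,1)
            have e1 := heqa _ _ hva hp1
            rw [hva, e1, hvb]
          · -- (1,2)
            have e1 := heqa _ _ hva hp1
            have e2 := heqb _ _ hvb hp2
            rcases hp3 with e3 | ⟨hp3', -⟩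
            · rw [e1, e2, e3]
            · exfalso
              have hστ : μ m a₁ a₂ := by
                have h := hμv
                rw [hva, hvb, ← e2] at h
                exact h
              have h2 := mupres m a₁ a₁ a₂ a₁ a₃ a₃ (murefl m _ ha1)
                (musymm m _ _ hστ) (murefl m _ ha3)
              rw [hm1] at h2
              exact hmid _ ha3 h2 hp3'
          · -- (1,3)
            have e1 := heqa _ _ hva hp1
            have e3 := heqb _ _ hvb hp3
            rcases hp2 with e2 | ⟨hp2', -⟩
            · rw [e1, e2, e3]
            · exfalso
              have hστ : μ m a₁ a₃ := by
                have h := hμv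
                rw [hva, hvb, ← e3] at h
                exact h
              have h2 := mupres m a₁ a₁ a₂ a₂ a₃ a₁ (murefl m _ ha1)
                (murefl m _ ha2) (musymm m _ _ hστ)
              rw [hm2] at h2
              exact hmid _ ha2 h2 hp2'
          · -- (2,1)
            have e2 := heqa _ _ hva hp2
            have e1 := heqb _ _ hvb hp1
            rcases hp3 with e3 | ⟨hp3', -⟩
            · rw [e1, e2, e3]
            · exfalso
              have hστ : μ m a₂ a₁ := by
                have h := hμv
                rw [hva, hvb, ← e1] at h
                exact h
              have h2 := mupres m a₁ a₂ a₂ a₂ a₃ a₃ (musymm m _ _ hστ)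
                (murefl m _ ha2) (murefl m _ ha3)
              rw [hm1] at h2
              exact hmid _ ha3 h2 hp3'
          · -- (2,2)
            have e2 := heqa _ _ hva hp2
            rw [hva, e2, hvb]
          · -- (2,3)
            have e2 := heqa _ _ hva hp2
            have e3 := heqb _ _ hvb hp3
            rcases hp1 with e1 | ⟨hp1', -⟩
            · rw [e1, e2, e3]
            · exfalso
              have hστ : μ m a₂ a₃ := by
                have h := hμv
                rw [hva, hvb, ← e3] at h
                exact h
              have h2 := mupres m a₁ a₁ a₂ a₂ a₃ a₂ (murefl m _ ha1)
                (murefl m _ ha2) (musymm m _ _ hστ)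
              rw [hm3] at h2
              exact hmid _ ha1 h2 hp1'
          · -- (3,1)
            have e3 := heqa _ _ hva hp3
            have e1 := heqb _ _ hvb hp1
            rcases hp2 with e2 | ⟨hp2', -⟩
            · rw [e1, e2, e3]
            · exfalso
              have hστ : μ m a₃ a₁ := by
                have h := hμv
                rw [hva, hvb, ← e1] at h
                exact h
              have h2 := mupres m a₁ a₃ a₂ a₂ a₃ a₃ (musymm m _ _ hστ)
                (murefl m _ ha2) (murefl m _ ha3)
              rw [hm2] at h2
              exact hmid _ ha2 h2 hp2'
          · -- (3,2)
            have e3 := heqa _ _ hva hp3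
            have e2 := heqb _ _ hvb hp2
            rcases hp1 with e1 | ⟨hp1', -⟩
            · rw [e1, e2, e3]
            · exfalso
              have hστ : μ m a₃ a₂ := by
                have h := hμv
                rw [hva, hvb, ← e2] at h
                exact h
              have h2 := mupres m a₁ a₁ a₂ a₃ a₃ a₃ (murefl m _ ha1)
                (musymm m _ _ hστ) (murefl m _ ha3)
              rw [hm3] at h2
              exact hmid _ ha1 h2 hp1'
          · -- (3,3)
            have e3 := heqa _ _ hva hp3
            rw [hva, e3, hvb]
        rcases hkey with hv | hv'
        · refine Or.inr ⟨hv, ?_⟩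
          have hμc : μ m c (f b₁ b₂ b₃) := by
            rcases hv with h | h
            · exact h ▸ hμv
            · exact mutrans m _ _ _ hcc' (h ▸ hμv)
          rcases class2c _ hμc with h | h
          · exact Or.inl h
          · exact Or.inr h
        · refine Or.inr ⟨?_, hv'⟩
          have hμc : μ m c (f a₁ a₂ a₃) := by
            rcases hv' with h | h
            · exact h ▸ musymm m _ _ hμv
            · exact mutrans m _ _ _ hcc' (h ▸ musymm m _ _ hμv)
          rcases class2c _ hμc with h | h
          · exact Or.inl h
          · exact Or.inr h
    have hkp := key_pair m δ hcong ⟨c, c', Or.inr ⟨Or.inl rfl, Or.inr rfl⟩, hnecc⟩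
    rcases hkp with ⟨-, hsa⟩ | ⟨hsm, ham⟩
    · exact absurd hsa.symm (has m)
    · rcases hsm with h1 | h1 <;> rcases ham with h2 | h2
      · exact absurd (h1.trans h2.symm) (fun h => has m h.symm)
      · exact Or.inl ⟨h1.symm, h2.symm⟩
      · exact Or.inr ⟨h2.symm, h1.symm⟩
      · exact absurd (h1.trans h2.symm) (fun h => has m h.symm)
  -- B m = {s m, a m}
  have hBeq : ∀ m, B m = {s m, a m} := by
    intro m
    obtain ⟨x₀, y₀, hxy₀, hμ₀, hB₀⟩ := hB m
    have hx₀ : x₀ = s m ∨ x₀ = a m := by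
      rcases mu_nt m x₀ y₀ hμ₀ hxy₀ with ⟨h, -⟩ | ⟨h, -⟩
      exacts [Or.inl h, Or.inr h]
    rw [hB₀]
    ext z
    simp only [Set.mem_setOf_eq, Set.mem_insert_iff, Set.mem_singleton_iff]
    constructor
    · intro hz
      by_cases hzz : x₀ = z
      · rw [← hzz]; exact hx₀
      · rcases mu_nt m x₀ z hz hzz with ⟨-, h⟩ | ⟨-, h⟩
        exacts [Or.inr h, Or.inl h]
    · rintro (rfl | rfl)
      · rcases hx₀ with h | h
        · rw [h]; exact murefl m _ (hsdom m)
        · rw [h]; exact musymm m _ _ (mu_pair m)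
      · rcases hx₀ with h | h
        · rw [h]; exact mu_pair m
        · rw [h]; exact murefl m _ (haA m)
  have hsB : ∀ m, s m ∈ B m := by
    intro m; rw [hBeq m]; exact Set.mem_insert _ _
  have haB : ∀ m, a m ∈ B m := by
    intro m; rw [hBeq m]; exact Set.mem_insert_iff.mpr (Or.inr rfl)
  have hBcases : ∀ m, ∀ b ∈ B m, b = s m ∨ b = a m := by
    intro m b hb
    rw [hBeq m] at hb
    simpa using hb
  have hBA : ∀ m, ∀ b ∈ B m, b ∈ A m := by
    intro m b hb
    rcases hBcases m b hb with rfl | rfl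
    exacts [hsdom m, haA m]
  have c1 : ∀ m : Fin n, (B m).ncard = 2 := by
    intro m
    rw [hBeq m]
    exact Set.ncard_pair (fun h => has m h.symm)
  -- f of an outer element with two block elements is the outer element
  have outer_id : ∀ (m : Fin n) x b b', x ∈ A m → x ∉ B m → b ∈ B m → b' ∈ B m →
      f x b b' = x ∧ f b x b' = x ∧ f b b' x = x := by
    intro m x b b' hxA hxB hb hb'
    have hbb' : μ m b b' := by
      rcases hBcases m b hb with h | h <;> rcases hBcases m b' hb' with h' | h' <;>
        rw [h, h']
      · exact murefl m _ (hsdom m)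
      · exact mu_pair m
      · exact musymm m _ _ (mu_pair m)
      · exact murefl m _ (haA m)
    have hbA : b ∈ A m := hBA m b hb
    have hnotnt : ∀ v, μ m v x → v = x := by
      intro v hv
      by_contra hne
      rcases mu_nt m v x hv hne with ⟨-, h⟩ | ⟨-, h⟩
      · exact hxB (by rw [h]; exact haB m)
      · exact hxB (by rw [h]; exact hsB m)
    refine ⟨?_, ?_, ?_⟩
    · have h := mupres m x x b b b' b (murefl m _ hxA) (murefl m _ hbA)
        (musymm m _ _ hbb')
      rw [hm3] at h
      exact hnotnt _ h
    · have h := mupres m b b x x b' b (murefl m _ hbA) (murefl m _ hxA)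
        (musymm m _ _ hbb')
      rw [hm2] at h
      exact hnotnt _ h
    · have h := mupres m b b b' b x x (murefl m _ hbA) (musymm m _ _ hbb')
        (murefl m _ hxA)
      rw [hm1] at h
      exact hnotnt _ h
  -- conclusion (3) : R splits
  have Rsplit : ∀ t ∈ R, (∀ m, t m ∈ B m) ∨ (∀ m, t m ∈ A m \ B m) := by
    intro t htR
    by_cases hex : ∃ m, t m ∈ B m
    · obtain ⟨m, hm⟩ := hex
      left
      intro l
      by_cases hlm : l = m
      · rw [hlm]; exact hm
      · have hrmm : r m m = a m := rfl
        set t' : Fin n → α := fun p => f (t p) (r m p) (s p) with ht'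
        have ht'S : t' ∈ S := hSpres t (r m) s (hRS t htR) (hRS _ (hrR m)) hsS
        have ht'agr : ∀ p, p ≠ m → t' p = t p := by
          intro p hp
          show f (t p) (r m p) (s p) = t p
          rw [hrs m p hp, hm3]
        have ht'm : t' m ≠ t m := by
          show f (t m) (r m m) (s m) ≠ t m
          rcases hBcases m _ hm with h | h
          · rw [h, hm2]
            exact has m
          · rw [h, hrmm, hm1]
            exact Ne.symm (has m)
        have ht'R : t' ∉ R := by
          intro hmem
          exact ht'm (congrFun (hfun t' hmem t htR m ht'agr) m)
        obtain ⟨w, hwR, hwa, hwμ⟩ := hcmpS t' ht'S l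
        have hwl : w l ≠ t' l := by
          intro h
          apply ht'R
          have heq : t' = w := by
            funext p
            by_cases hp : p = l
            · rw [hp, h]
            · exact hwa p hp
          rw [heq]; exact hwR
        have htl : t' l = t l := ht'agr l hlm
        rw [htl] at hwμ hwl
        rcases mu_nt l _ _ hwμ (fun h => hwl h.symm) with ⟨h, -⟩ | ⟨h, -⟩
        · rw [h]; exact hsB l
        · rw [h]; exact haB l
    · right
      intro l
      exact ⟨hdom t htR l, fun hb => hex ⟨l, hb⟩⟩
  -- the parity cube
  have cube : ∀ k : ℕ, ∀ t : Fin n → α, (∀ m, t m ∈ B m) →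
      (Finset.filter (fun m => t m = a m) Finset.univ).card = k →
      (Odd k → t ∈ R) ∧ (Even k → t ∈ S ∧ t ∉ R) := by
    intro k
    induction k using Nat.strong_induction_on with
    | _ k IH =>
      intro t htB hk
      have htB' : ∀ m, t m = s m ∨ t m = a m := fun m => hBcases m _ (htB m)
      by_cases hk0 : k = 0
      · subst hk0
        have hts : t = s := by
          funext m
          rcases htB' m with h | h
          · exact h
          · exfalso
            have hmm : m ∈ Finset.filter (fun m => t m = a m) Finset.univ := by
              simp [h]
            rw [Finset.card_eq_zero] at hk
            rw [hk] at hmm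
            exact absurd hmm (Finset.notMem_empty m)
        subst hts
        constructor
        · intro hodd
          rw [Nat.odd_iff] at hodd
          exact absurd hodd (by decide)
        · intro _
          exact ⟨hsS, hs⟩
      by_cases hk1 : k = 1
      · subst hk1
        rw [Finset.card_eq_one] at hk
        obtain ⟨i0, hi0⟩ := hk
        have hmem : ∀ m, t m = a m ↔ m = i0 := by
          intro m
          constructor
          · intro h
            have hmm : m ∈ Finset.filter (fun m => t m = a m) Finset.univ := by simp [h]
            rw [hi0] at hmm
            simpa using hmm
          · intro hm
            rw [hm]
            have hmm : i0 ∈ Finset.filter (fun m => t m = a m) Finset.univ := by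
              rw [hi0]
              exact Finset.mem_singleton_self i0
            exact (Finset.mem_filter.mp hmm).2
        have htr : t = r i0 := by
          funext p
          by_cases hp : p = i0
          · rw [hp, (hmem i0).mpr rfl]
          · rw [hrs i0 p hp]
            rcases htB' p with h | h
            · exact h
            · exact absurd ((hmem p).mp h) hp
        constructor
        · intro _
          rw [htr]
          exact hrR i0
        · intro heven
          rw [Nat.even_iff] at heven
          exact absurd heven (by decide)
      -- k ≥ 2
      have hk2 : 2 ≤ k := by omega
      have h1lt : 1 < (Finset.filter (fun m => t m = a m) Finset.univ).card := by
        rw [hk]; omega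
      obtain ⟨i, hi, j, hj, hij⟩ := Finset.one_lt_card.mp h1lt
      have hti : t i = a i := (Finset.mem_filter.mp hi).2
      have htj : t j = a j := (Finset.mem_filter.mp hj).2
      have hupd : ∀ (w : Fin n → α) (p : Fin n), (∀ m, w m ∈ B m) →
          (∀ m, Function.update w p (s p) m ∈ B m) ∧
          Finset.filter (fun m => Function.update w p (s p) m = a m) Finset.univ
            = (Finset.filter (fun m => w m = a m) Finset.univ).erase p := by
        intro w p hwB
        constructor
        · intro m
          by_cases hm : m = p
          · rw [hm, Function.update_self]; exact hsB p
          · rw [Function.update_of_ne hm]; exact hwB m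
        · ext m
          simp only [Finset.mem_filter, Finset.mem_erase, Finset.mem_univ, true_and]
          by_cases hm : m = p
          · subst hm
            rw [Function.update_self]
            constructor
            · intro h; exact absurd h (Ne.symm (has m))
            · rintro ⟨h, -⟩; exact absurd rfl h
          · rw [Function.update_of_ne hm]
            constructor
            · intro h; exact ⟨hm, h⟩
            · rintro ⟨-, h⟩; exact h
      set t1 := Function.update t i (s i) with ht1def
      set t2 := Function.update t j (s j) with ht2def
      set t12 := Function.update t1 j (s j) with ht12def
      obtain ⟨ht1B, ht1F⟩ := hupd t i htB
      obtain ⟨ht2B, ht2F⟩ := hupd t j htB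
      obtain ⟨ht12B, ht12F⟩ := hupd t1 j ht1B
      have ht1card : (Finset.filter (fun m => t1 m = a m) Finset.univ).card = k - 1 := by
        rw [ht1def, ht1F, Finset.card_erase_of_mem hi, hk]
      have ht2card : (Finset.filter (fun m => t2 m = a m) Finset.univ).card = k - 1 := by
        rw [ht2def, ht2F, Finset.card_erase_of_mem hj, hk]
      have ht12card : (Finset.filter (fun m => t12 m = a m) Finset.univ).card = k - 2 := by
        rw [ht12def, ht12F, ht1def, ht1F]
        have hjmem : j ∈ (Finset.filter (fun m => t m = a m) Finset.univ).erase i :=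
          Finset.mem_erase.mpr ⟨Ne.symm hij, hj⟩
        rw [Finset.card_erase_of_mem hjmem, Finset.card_erase_of_mem hi, hk]
        omega
      have ht1i : t1 i = s i := by rw [ht1def]; exact Function.update_self _ _ _
      have ht1o : ∀ p, p ≠ i → t1 p = t p := by
        intro p hp; rw [ht1def]; exact Function.update_of_ne hp _ _
      have ht2j : t2 j = s j := by rw [ht2def]; exact Function.update_self _ _ _
      have ht2o : ∀ p, p ≠ j → t2 p = t p := by
        intro p hp; rw [ht2def]; exact Function.update_of_ne hp _ _
      have ht12j : t12 j = s j := by rw [ht12def]; exact Function.update_self _ _ _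
      have ht12o : ∀ p, p ≠ j → t12 p = t1 p := by
        intro p hp; rw [ht12def]; exact Function.update_of_ne hp _ _
      have heqt : t = fun m => f (t1 m) (t12 m) (t2 m) := by
        funext m
        by_cases hmi : m = i
        · rw [hmi, ht12o i hij, ht1i, ht2o i hij, hm1]
        · by_cases hmj : m = j
          · rw [hmj, ht1o j (Ne.symm hij), ht12j, ht2j, hm3]
          · rw [ht12o m hmj, ht1o m hmi, ht2o m hmj, hm1]
      have IH1 := IH (k - 1) (by omega) t1 ht1B ht1card
      have IH2 := IH (k - 1) (by omega) t2 ht2B ht2card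
      have IH12 := IH (k - 2) (by omega) t12 ht12B ht12card
      rcases Nat.even_or_odd k with hev | hod
      · -- k even : t ∈ S \ R
        have hoddk1 : Odd (k - 1) := by
          rw [Nat.even_iff] at hev
          rw [Nat.odd_iff]
          omega
        have hevk2 : Even (k - 2) := by
          rw [Nat.even_iff] at hev ⊢
          omega
        have ht1R : t1 ∈ R := IH1.1 hoddk1
        have ht2R : t2 ∈ R := IH2.1 hoddk1
        have ht12SR : t12 ∈ S ∧ t12 ∉ R := IH12.2 hevk2
        have htS : t ∈ S := by
          rw [heqt]
          exact hSpres t1 t12 t2 (hRS _ ht1R) ht12SR.1 (hRS _ ht2R)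
        constructor
        · intro hodd
          exfalso
          rw [Nat.odd_iff] at hodd
          rw [Nat.even_iff] at hev
          omega
        · intro _
          refine ⟨htS, ?_⟩
          intro htR
          have heq := hfun t htR t1 ht1R i (by
            intro p hp
            rw [ht1def, Function.update_of_ne hp])
          have hcf := congrFun heq i
          rw [hti, ht1def, Function.update_self] at hcf
          exact has i hcf
      · -- k odd : t ∈ R
        have hevk1 : Even (k - 1) := by
          rw [Nat.odd_iff] at hod
          rw [Nat.even_iff]
          omega
        have hoddk2 : Odd (k - 2) := by
          rw [Nat.odd_iff] at hod ⊢
          omega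
        have ht1SR : t1 ∈ S ∧ t1 ∉ R := IH1.2 hevk1
        have ht2SR : t2 ∈ S ∧ t2 ∉ R := IH2.2 hevk1
        have ht12R : t12 ∈ R := IH12.1 hoddk2
        have htS : t ∈ S := by
          rw [heqt]
          exact hSpres t1 t12 t2 ht1SR.1 (hRS _ ht12R) ht2SR.1
        have htR : t ∈ R := by
          by_contra htR
          obtain ⟨w, hwR, hwa, hwμ⟩ := hcmpS t htS i
          by_cases hwi : w i = t i
          · apply htR
            have heq : t = w := by
              funext p
              by_cases hp : p = i
              · rw [hp]; exact hwi.symm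
              · exact hwa p hp
            rw [heq]; exact hwR
          · rcases mu_nt i _ _ hwμ (fun h => hwi h.symm) with ⟨h1, h2⟩ | ⟨h1, h2⟩
            · exact absurd (hti.symm.trans h1) (has i)
            · have heq : w = t1 := by
                funext p
                by_cases hp : p = i
                · rw [hp, h2, ht1def, Function.update_self]
                · rw [← hwa p hp, ht1def, Function.update_of_ne hp]
              exact ht1SR.2 (heq ▸ hwR)
        constructor
        · intro _; exact htR
        · intro heven
          exfalso
          rw [Nat.odd_iff] at hod
          rw [Nat.even_iff] at heven
          omega
  -- the labelling
  set la : Fin n → α → ZMod 2 := fun m x => if x = a m then 1 else 0 with hladef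
  have hla0 : ∀ m, la m (s m) = 0 := by
    intro m
    show (if s m = a m then (1 : ZMod 2) else 0) = 0
    rw [if_neg (Ne.symm (has m))]
  have hla1 : ∀ m, la m (a m) = 1 := by
    intro m
    show (if a m = a m then (1 : ZMod 2) else 0) = 1
    rw [if_pos rfl]
  have hlaBij : ∀ m, Set.BijOn (la m) (B m) Set.univ := by
    intro m
    refine ⟨fun x _ => Set.mem_univ _, ?_, ?_⟩
    · intro x hx y hy hxy
      rcases hBcases m x hx with rfl | rfl <;> rcases hBcases m y hy with rfl | rfl
      · rfl
      · rw [hla0, hla1] at hxy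
        exact absurd hxy (by decide)
      · rw [hla0, hla1] at hxy
        exact absurd hxy (by decide)
      · rfl
    · intro z _
      rcases (by decide : ∀ z : ZMod 2, z = 0 ∨ z = 1) z with rfl | rfl
      · exact ⟨s m, hsB m, hla0 m⟩
      · exact ⟨a m, haB m, hla1 m⟩
  have hsum : ∀ t : Fin n → α, (∑ m, la m (t m)) =
      ((Finset.filter (fun m => t m = a m) Finset.univ).card : ZMod 2) := by
    intro t
    rw [← Finset.sum_boole]
  have hcast : ∀ k : ℕ, ((k : ZMod 2) = 1 ↔ k % 2 = 1) := by
    intro k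
    have hsplit : (k : ZMod 2) = ((k % 2 : ℕ) : ZMod 2) := by
      conv_lhs => rw [← Nat.mod_add_div k 2]
      push_cast
      rw [show (2 : ZMod 2) = 0 from by decide]
      ring
    rw [hsplit]
    have hor : k % 2 = 0 ∨ k % 2 = 1 := by omega
    rcases hor with h | h <;> rw [h]
    · rw [Nat.cast_zero]
      constructor
      · intro h'; exact absurd h' (by decide)
      · intro h'; exact absurd h' (by decide)
    · rw [Nat.cast_one]
      simp
  have c2 : ∀ t : Fin n → α, (∀ m, t m ∈ B m) → (t ∈ R ↔ (∑ m, la m (t m)) = 1) := by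
    intro t htB
    obtain ⟨hO, hE⟩ := cube _ t htB rfl
    rw [hsum t, hcast]
    constructor
    · intro htR
      by_contra hne
      have hev : (Finset.filter (fun m => t m = a m) Finset.univ).card % 2 = 0 := by omega
      exact (hE (Nat.even_iff.mpr hev)).2 htR
    · intro h
      exact hO (Nat.odd_iff.mpr h)
  -- r-tuples lie in the block cube
  have hrB : ∀ (p m : Fin n), r p m ∈ B m := by
    intro p m
    by_cases h : m = p
    · rw [h]; exact haB p
    · rw [hrs p m h]; exact hsB m
  -- (4a)
  have hout : ∀ (m : Fin n) x, x ∈ A m → x ∉ B m →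
      ∃ w, w ∈ R ∧ (∀ l, w l ∈ A l \ B l) ∧ w m = x := by
    intro m x hxA hxB
    obtain ⟨w, hwR, hwm⟩ := hsub m x hxA
    rcases Rsplit w hwR with hall | hall
    · exact absurd (hwm ▸ hall m) hxB
    · exact ⟨w, hwR, hall, hwm⟩
  -- (4b)
  have inj_pair : ∀ i j : Fin n, i ≠ j → ∀ t t', t ∈ R → t' ∈ R →
      (∀ m, t m ∈ A m \ B m) → (∀ m, t' m ∈ A m \ B m) → t i = t' i → t j = t' j := by
    intro i j hij t0 t0' ht0R ht0'R ht0out ht0'out ht0i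
    by_contra hne2
    obtain ⟨k, hki, hkj⟩ := third i j
    set Q : α → α → Prop := fun x y => ∃ u u', (u ∈ R ∧ ∀ m, u m ∈ A m \ B m) ∧
      (u' ∈ R ∧ ∀ m, u' m ∈ A m \ B m) ∧ u i = u' i ∧ u j = x ∧ u' j = y with hQdef
    set δ : α → α → Prop := fun x y => (x ∈ A j ∧ x = y) ∨ Q x y with hδdef
    have sel : ∀ x y, δ x y → ∃ T T', T ∈ R ∧ T' ∈ R ∧ T i = T' i ∧ T j = x ∧ T' j = y ∧
        (((∀ m, T m ∈ A m \ B m) ∧ (∀ m, T' m ∈ A m \ B m) ∧ x ∉ B j ∧ y ∉ B j) ∨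
         ((∀ m, T m ∈ B m) ∧ T = T' ∧ x = y ∧ x ∈ B j)) := by
      intro x y hxy
      simp only [hδdef, hQdef] at hxy
      rcases hxy with ⟨hxA, rfl⟩ | ⟨u, u', ⟨huR, huO⟩, ⟨hu'R, hu'O⟩, hui, huj, hu'j⟩
      · by_cases hxB : x ∈ B j
        · rcases hBcases j x hxB with h | h
          · refine ⟨r k, r k, hrR k, hrR k, rfl, ?_, ?_, Or.inr ⟨fun m => hrB k m, rfl, rfl, hxB⟩⟩
            · rw [h]; exact hrs k j (Ne.symm hkj)
            · rw [h]; exact hrs k j (Ne.symm hkj)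
          · refine ⟨r j, r j, hrR j, hrR j, rfl, ?_, ?_, Or.inr ⟨fun m => hrB j m, rfl, rfl, hxB⟩⟩
            · rw [h]
            · rw [h]
        · obtain ⟨w, hwR, hwO, hwm⟩ := hout j x hxA hxB
          exact ⟨w, w, hwR, hwR, rfl, hwm, hwm, Or.inl ⟨hwO, hwO, hxB, hxB⟩⟩
      · exact ⟨u, u', huR, hu'R, hui, huj, hu'j,
          Or.inl ⟨huO, hu'O, huj ▸ (huO j).2, hu'j ▸ (hu'O j).2⟩⟩
    have hcongδ : IsCongOn f (A j) δ := by
      refine ⟨?_, ?_, ?_, ?_, ?_⟩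
      · intro x y h
        simp only [hδdef, hQdef] at h
        rcases h with ⟨hx, rfl⟩ | ⟨u, u', ⟨huR, -⟩, ⟨hu'R, -⟩, -, huj, hu'j⟩
        · exact ⟨hx, hx⟩
        · exact ⟨huj ▸ hdom u huR j, hu'j ▸ hdom u' hu'R j⟩
      · intro x hx
        exact Or.inl ⟨hx, rfl⟩
      · intro x y h
        simp only [hδdef, hQdef] at h ⊢
        rcases h with ⟨hx, rfl⟩ | ⟨u, u', hu, hu', hui, huj, hu'j⟩
        · exact Or.inl ⟨hx, rfl⟩
        · exact Or.inr ⟨u', u, hu', hu, hui.symm, hu'j, huj⟩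
      · intro x y z h h2
        simp only [hδdef, hQdef] at h h2 ⊢
        rcases h with ⟨hx, rfl⟩ | hq
        · exact h2
        · rcases h2 with ⟨hy, rfl⟩ | ⟨u2, u2', hu2, hu2', hu2i, hu2j, hu2'j⟩
          · exact Or.inr hq
          · obtain ⟨u, u', ⟨huR, huO⟩, ⟨hu'R, hu'O⟩, hui, huj, hu'j⟩ := hq
            refine Or.inr ⟨fun m => f (u m) (u' m) (u2 m), u2',
              ⟨hinv _ _ _ huR hu'R hu2.1, ?_⟩, ⟨hu2'.1, hu2'.2⟩, ?_, ?_, hu2'j⟩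
            · intro m
              refine ⟨hAcl m _ _ _ (huO m).1 (hu'O m).1 (hu2.2 m).1, ?_⟩
              intro hbad
              have hbad' : f (u m) (u' m) (u2 m) ∈ B m := hbad
              rcases hcons (u m) (u' m) (u2 m) with hc | hc | hc <;> rw [hc] at hbad'
              · exact (huO m).2 hbad'
              · exact (hu'O m).2 hbad'
              · exact (hu2.2 m).2 hbad'
            · show f (u i) (u' i) (u2 i) = u2' i
              rw [hui, hm1, hu2i]
            · show f (u j) (u' j) (u2 j) = x
              rw [huj, hu'j, hu2j, hm3]
      · intro x1 y1 x2 y2 x3 y3 h1 h2 h3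
        obtain ⟨T1, T1', hT1R, hT1'R, hT1i, hT1j, hT1'j, hd1⟩ := sel _ _ h1
        obtain ⟨T2, T2', hT2R, hT2'R, hT2i, hT2j, hT2'j, hd2⟩ := sel _ _ h2
        obtain ⟨T3, T3', hT3R, hT3'R, hT3i, hT3j, hT3'j, hd3⟩ := sel _ _ h3
        have hVR : (fun m => f (T1 m) (T2 m) (T3 m)) ∈ R := hinv _ _ _ hT1R hT2R hT3R
        have hV'R : (fun m => f (T1' m) (T2' m) (T3' m)) ∈ R := hinv _ _ _ hT1'R hT2'R hT3'R
        have hVi : f (T1 i) (T2 i) (T3 i) = f (T1' i) (T2' i) (T3' i) := by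
          rw [hT1i, hT2i, hT3i]
        have hVj : f (T1 j) (T2 j) (T3 j) = f x1 x2 x3 := by
          rw [hT1j, hT2j, hT3j]
        have hV'j : f (T1' j) (T2' j) (T3' j) = f y1 y2 y3 := by
          rw [hT1'j, hT2'j, hT3'j]
        have hfA : f x1 x2 x3 ∈ A j := by
          rw [← hVj]; exact hdom _ hVR j
        simp only [hδdef, hQdef]
        rcases Rsplit _ hVR with hVB | hVO <;> rcases Rsplit _ hV'R with hV'B | hV'O
        · -- both in the block cube
          refine Or.inl ⟨hfA, ?_⟩
          have hfxB : f x1 x2 x3 ∈ B j := by rw [← hVj]; exact hVB j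
          have hfyB : f y1 y2 y3 ∈ B j := by rw [← hV'j]; exact hV'B j
          have hx1A : x1 ∈ A j := by rw [← hT1j]; exact hdom T1 hT1R j
          have hx2A : x2 ∈ A j := by rw [← hT2j]; exact hdom T2 hT2R j
          have hx3A : x3 ∈ A j := by rw [← hT3j]; exact hdom T3 hT3R j
          rcases hd1 with ⟨-, -, hx1O, hy1O⟩ | ⟨-, -, e1, hb1⟩ <;>
            rcases hd2 with ⟨-, -, hx2O, hy2O⟩ | ⟨-, -, e2, hb2⟩ <;>
            rcases hd3 with ⟨-, -, hx3O, hy3O⟩ | ⟨-, -, e3, hb3⟩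
          · exfalso
            rcases hcons x1 x2 x3 with h | h | h <;> rw [h] at hfxB
            exacts [hx1O hfxB, hx2O hfxB, hx3O hfxB]
          · have hfx : f x1 x2 x3 = x3 := by
              rcases hcons x1 x2 x3 with h | h | h
              · exact absurd (h ▸ hfxB) hx1O
              · exact absurd (h ▸ hfxB) hx2O
              · exact h
            have hfy : f y1 y2 y3 = y3 := by
              rcases hcons y1 y2 y3 with h | h | h
              · exact absurd (h ▸ hfyB) hy1O
              · exact absurd (h ▸ hfyB) hy2O
              · exact h
            rw [hfx, hfy, ← e3]
          · have hfx : f x1 x2 x3 = x2 := by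
              rcases hcons x1 x2 x3 with h | h | h
              · exact absurd (h ▸ hfxB) hx1O
              · exact h
              · exact absurd (h ▸ hfxB) hx3O
            have hfy : f y1 y2 y3 = y2 := by
              rcases hcons y1 y2 y3 with h | h | h
              · exact absurd (h ▸ hfyB) hy1O
              · exact h
              · exact absurd (h ▸ hfyB) hy3O
            rw [hfx, hfy, ← e2]
          · exfalso
            have hid := (outer_id j x1 x2 x3 hx1A hx1O hb2 hb3).1
            rw [hid] at hfxB
            exact hx1O hfxB
          · have hfx : f x1 x2 x3 = x1 := by
              rcases hcons x1 x2 x3 with h | h | h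
              · exact h
              · exact absurd (h ▸ hfxB) hx2O
              · exact absurd (h ▸ hfxB) hx3O
            have hfy : f y1 y2 y3 = y1 := by
              rcases hcons y1 y2 y3 with h | h | h
              · exact h
              · exact absurd (h ▸ hfyB) hy2O
              · exact absurd (h ▸ hfyB) hy3O
            rw [hfx, hfy, ← e1]
          · exfalso
            have hid := (outer_id j x2 x1 x3 hx2A hx2O hb1 hb3).2.1
            rw [hid] at hfxB
            exact hx2O hfxB
          · exfalso
            have hid := (outer_id j x3 x1 x2 hx3A hx3O hb1 hb2).2.2
            rw [hid] at hfxB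
            exact hx3O hfxB
          · rw [e1, e2, e3]
        · exfalso
          have h1' := hVB i
          have h2' := (hV'O i).2
          rw [← hVi] at h2'
          exact h2' h1'
        · exfalso
          have h1' := hV'B i
          have h2' := (hVO i).2
          rw [hVi] at h2'
          exact h2' h1'
        · exact Or.inr ⟨_, _, ⟨hVR, hVO⟩, ⟨hV'R, hV'O⟩, hVi, hVj, hV'j⟩
    have hnt : NontrivialRel δ := by
      refine ⟨t0 j, t0' j, ?_, hne2⟩
      simp only [hδdef, hQdef]
      exact Or.inr ⟨t0, t0', ⟨ht0R, ht0out⟩, ⟨ht0'R, ht0'out⟩, ht0i, rfl, rfl⟩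
    have hkp := mu_min j δ hcongδ hnt _ _ (mu_pair j)
    simp only [hδdef, hQdef] at hkp
    rcases hkp with ⟨-, hsa⟩ | ⟨u, u', ⟨huR, huO⟩, -, -, huj, -⟩
    · exact has j hsa.symm
    · exact (huO j).2 (by rw [huj]; exact hsB j)
  -- conclusion (5)
  have c5 : ∀ i j : Fin n, ∃ g : α → α, Set.BijOn g (A i) (A j) ∧
      ∀ x ∈ A i, ∀ y ∈ A i, ∀ z ∈ A i, g (f x y z) = f (g x) (g y) (g z) := by
    intro i j
    by_cases hij : i = j
    · subst hij
      exact ⟨id, Set.bijOn_id (A i), fun x _ y _ z _ => rfl⟩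
    · have houti : ∀ x, x ∈ A i \ B i → ∃ w, w ∈ R ∧ (∀ l, w l ∈ A l \ B l) ∧ w i = x :=
        fun x hx => hout i x hx.1 hx.2
      choose wit hwitR hwitO hwiti using houti
      set g : α → α := fun x => if hx : x ∈ A i \ B i then wit x hx j
        else if x = s i then a j else if x = a i then s j else x with hgdef
      have hsBi' : s i ∉ A i \ B i := fun h => h.2 (hsB i)
      have haBi' : a i ∉ A i \ B i := fun h => h.2 (haB i)
      have hg_s : g (s i) = a j := by
        show (if hx : s i ∈ A i \ B i then wit (s i) hx j
          else if s i = s i then a j else if s i = a i then s j else s i) = a j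
        rw [dif_neg hsBi', if_pos rfl]
      have hg_a : g (a i) = s j := by
        show (if hx : a i ∈ A i \ B i then wit (a i) hx j
          else if a i = s i then a j else if a i = a i then s j else a i) = s j
        rw [dif_neg haBi', if_neg (has i), if_pos rfl]
      have hg_o : ∀ x (hx : x ∈ A i \ B i), g x = wit x hx j := by
        intro x hx
        show (if hx' : x ∈ A i \ B i then wit x hx' j
          else if x = s i then a j else if x = a i then s j else x) = wit x hx j
        rw [dif_pos hx]
      have hgoO : ∀ x (hx : x ∈ A i \ B i), g x ∈ A j \ B j := by
        intro x hx
        rw [hg_o x hx]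
        exact hwitO x hx j
      have htr : ∀ w, w ∈ R → (∀ l, w l ∈ A l \ B l) → g (w i) = w j := by
        intro w hwR hwO
        have hx : w i ∈ A i \ B i := hwO i
        rw [hg_o _ hx]
        exact inj_pair i j hij (wit _ hx) w (hwitR _ hx) hwR (hwitO _ hx) hwO (hwiti _ hx)
      have hgB : ∀ v, v ∈ B i → g v ∈ B j := by
        intro v hv
        rcases hBcases i v hv with h | h
        · rw [h, hg_s]; exact haB j
        · rw [h, hg_a]; exact hsB j
      have hbij : Set.BijOn g (A i) (A j) := by
        refine ⟨?_, ?_, ?_⟩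
        · intro x hxA
          by_cases hx : x ∈ A i \ B i
          · exact (hgoO x hx).1
          · have hxB : x ∈ B i := by by_contra h; exact hx ⟨hxA, h⟩
            exact hBA j _ (hgB x hxB)
        · intro x hxA y hyA hgxy
          by_cases hx : x ∈ A i \ B i
          · by_cases hy : y ∈ A i \ B i
            · rw [hg_o x hx, hg_o y hy] at hgxy
              have := inj_pair j i (Ne.symm hij) (wit x hx) (wit y hy)
                (hwitR x hx) (hwitR y hy) (hwitO x hx) (hwitO y hy) hgxy
              rw [hwiti x hx, hwiti y hy] at this
              exact this
            · have hyB : y ∈ B i := by by_contra h; exact hy ⟨hyA, h⟩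
              exact absurd (hgxy ▸ hgB y hyB) (hgoO x hx).2
          · have hxB : x ∈ B i := by by_contra h; exact hx ⟨hxA, h⟩
            by_cases hy : y ∈ A i \ B i
            · exact absurd (hgxy ▸ hgB x hxB) (hgoO y hy).2
            · have hyB : y ∈ B i := by by_contra h; exact hy ⟨hyA, h⟩
              rcases hBcases i x hxB with h1 | h1 <;> rcases hBcases i y hyB with h2 | h2
              · rw [h1, h2]
              · rw [h1, h2, hg_s, hg_a] at hgxy
                exact absurd hgxy (has j)
              · rw [h1, h2, hg_a, hg_s] at hgxy
                exact absurd hgxy (fun h => has j h.symm)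
              · rw [h1, h2]
        · intro y hyA
          by_cases hyB : y ∈ B j
          · rcases hBcases j y hyB with h | h
            · exact ⟨a i, haA i, hg_a.trans h.symm⟩
            · exact ⟨s i, hsdom i, hg_s.trans h.symm⟩
          · obtain ⟨w, hwR, hwO, hwm⟩ := hout j y hyA hyB
            exact ⟨w i, (hwO i).1, (htr w hwR hwO).trans hwm⟩
      -- tuples through (i,j) realizing g
      have hTsel : ∀ v, v ∈ A i → ∃ T, T ∈ R ∧ T i = v ∧ T j = g v ∧
          ((∀ m, T m ∈ B m) ∧ v ∈ B i ∨ (∀ m, T m ∈ A m \ B m) ∧ v ∉ B i) := by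
        intro v hvA
        by_cases hvB : v ∈ B i
        · rcases hBcases i v hvB with h | h
          · subst h
            exact ⟨r j, hrR j, hrs j i hij, by rw [hg_s],
              Or.inl ⟨fun m => hrB j m, hsB i⟩⟩
          · subst h
            exact ⟨r i, hrR i, rfl, by rw [hg_a]; exact hrs i j (Ne.symm hij),
              Or.inl ⟨fun m => hrB i m, haB i⟩⟩
        · have hx : v ∈ A i \ B i := ⟨hvA, hvB⟩
          exact ⟨wit v hx, hwitR v hx, hwiti v hx, (hg_o v hx).symm,
            Or.inr ⟨hwitO v hx, hvB⟩⟩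
      refine ⟨g, hbij, ?_⟩
      intro x hxA y hyA z hzA
      obtain ⟨Tx, hTxR, hTxi, hTxj, hdx⟩ := hTsel x hxA
      obtain ⟨Ty, hTyR, hTyi, hTyj, hdy⟩ := hTsel y hyA
      obtain ⟨Tz, hTzR, hTzi, hTzj, hdz⟩ := hTsel z hzA
      have hWR : (fun m => f (Tx m) (Ty m) (Tz m)) ∈ R := hinv _ _ _ hTxR hTyR hTzR
      have hWi : f (Tx i) (Ty i) (Tz i) = f x y z := by rw [hTxi, hTyi, hTzi]
      have hWj : f (Tx j) (Ty j) (Tz j) = f (g x) (g y) (g z) := by rw [hTxj, hTyj, hTzj]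
      rcases Rsplit _ hWR with hWB | hWO
      · have hfB : f x y z ∈ B i := by
          have h := hWB i
          have h' : f (Tx i) (Ty i) (Tz i) ∈ B i := h
          rwa [hWi] at h'
        have hfjB : f (g x) (g y) (g z) ∈ B j := by
          have h := hWB j
          have h' : f (Tx j) (Ty j) (Tz j) ∈ B j := h
          rwa [hWj] at h'
        rcases hdx with ⟨-, hxB⟩ | ⟨-, hxB⟩ <;> rcases hdy with ⟨-, hyB⟩ | ⟨-, hyB⟩ <;>
          rcases hdz with ⟨-, hzB⟩ | ⟨-, hzB⟩
        · -- B B B : pigeonhole in the 2-element block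
          by_cases hxy : x = y
          · rw [hxy, hm1, hm1]
          · have hz2 : z = x ∨ z = y := by
              rcases hBcases i x hxB with h1 | h1 <;> rcases hBcases i y hyB with h2 | h2 <;>
                rcases hBcases i z hzB with h3 | h3
              · exact absurd (h1.trans h2.symm) hxy
              · exact absurd (h1.trans h2.symm) hxy
              · exact Or.inl (h3.trans h1.symm)
              · exact Or.inr (h3.trans h2.symm)
              · exact Or.inr (h3.trans h2.symm)
              · exact Or.inl (h3.trans h1.symm)
              · exact absurd (h1.trans h2.symm) hxy
              · exact absurd (h1.trans h2.symm) hxy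
            rcases hz2 with h | h
            · rw [h, hm2, hm2]
            · rw [h, hm3, hm3]
        · exfalso
          have hid := (outer_id i z x y hzA hzB hxB hyB).2.2
          rw [hid] at hfB
          exact hzB hfB
        · exfalso
          have hid := (outer_id i y x z hyA hyB hxB hzB).2.1
          rw [hid] at hfB
          exact hyB hfB
        · -- x in B, y z outer
          have hfx : f x y z = x := by
            rcases hcons x y z with h | h | h
            · exact h
            · exact absurd (h ▸ hfB) hyB
            · exact absurd (h ▸ hfB) hzB
          have hgy' : g y ∉ B j := (hgoO y ⟨hyA, hyB⟩).2
          have hgz' : g z ∉ B j := (hgoO z ⟨hzA, hzB⟩).2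
          have hfy : f (g x) (g y) (g z) = g x := by
            rcases hcons (g x) (g y) (g z) with h | h | h
            · exact h
            · exact absurd (h ▸ hfjB) hgy'
            · exact absurd (h ▸ hfjB) hgz'
          rw [hfx, hfy]
        · exfalso
          have hid := (outer_id i x y z hxA hxB hyB hzB).1
          rw [hid] at hfB
          exact hxB hfB
        · -- y in B, x z outer
          have hfx : f x y z = y := by
            rcases hcons x y z with h | h | h
            · exact absurd (h ▸ hfB) hxB
            · exact h
            · exact absurd (h ▸ hfB) hzB
          have hgx' : g x ∉ B j := (hgoO x ⟨hxA, hxB⟩).2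
          have hgz' : g z ∉ B j := (hgoO z ⟨hzA, hzB⟩).2
          have hfy : f (g x) (g y) (g z) = g y := by
            rcases hcons (g x) (g y) (g z) with h | h | h
            · exact absurd (h ▸ hfjB) hgx'
            · exact h
            · exact absurd (h ▸ hfjB) hgz'
          rw [hfx, hfy]
        · -- z in B, x y outer
          have hfx : f x y z = z := by
            rcases hcons x y z with h | h | h
            · exact absurd (h ▸ hfB) hxB
            · exact absurd (h ▸ hfB) hyB
            · exact h
          have hgx' : g x ∉ B j := (hgoO x ⟨hxA, hxB⟩).2
          have hgy' : g y ∉ B j := (hgoO y ⟨hyA, hyB⟩).2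
          have hfy : f (g x) (g y) (g z) = g z := by
            rcases hcons (g x) (g y) (g z) with h | h | h
            · exact absurd (h ▸ hfjB) hgx'
            · exact absurd (h ▸ hfjB) hgy'
            · exact h
          rw [hfx, hfy]
        · exfalso
          rcases hcons x y z with h | h | h <;> rw [h] at hfB
          exacts [hxB hfB, hyB hfB, hzB hfB]
      · have h2 : g (f (Tx i) (Ty i) (Tz i)) = f (Tx j) (Ty j) (Tz j) := htr _ hWR hWO
        rw [hWi, hWj] at h2
        exact h2
  -- final assembly
  refine ⟨c1, ⟨la, hlaBij, fun t htB => c2 t htB⟩, Rsplit, ?_, c5⟩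
  intro i j hij
  constructor
  · intro x hx
    obtain ⟨w, hwR, hwO, hwm⟩ := hout i x hx.1 hx.2
    exact ⟨w, hwR, hwO, hwm⟩
  · intro t htR t' ht'R htO ht'O
    constructor
    · exact inj_pair i j hij t t' htR ht'R htO ht'O
    · exact inj_pair j i (Ne.symm hij) t t' htR ht'R htO ht'O
end

section
/- Let A be a finite set with a conservative minority operation f and let k ≥ 1. For any relation U ⊆ A^k the following are equivalent: (1) f preserves U; (2) U is primitively positively definable from the following set of relations on A: (a) all unary relations X ⊆ A; (b) all subdirect transversal endomorphism graphs, i.e., graphs {(x, e(x)) : x ∈ A'} of surjective homomorphic retractions e of a subalgebra (A';f), A' ⊆ A, onto a subdirectly irreducible subalgebra (B;f) with B ⊆ A' (e : A' → B surjective, e(f(x,y,z)) = f(e(x),e(y),e(z)) for all x,y,z ∈ A', and e(b) = b for all b ∈ B); (c) all subdirect, functional, multisorted critical relations T ⊆ A₁ × ⋯ × Aₙ, for n ≥ 2 and subdirectly irreducible subalgebras (A₁;f),…,(Aₙ;f) with A_i ⊆ A. -/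
/-- Encoding of a unary relation `X ⊆ α` as a relation of arity 1. -/
def unaryRel {α : Type*} (X : Set α) : Set (Fin 1 → α) := {t | t 0 ∈ X}

/-- The graph `{(x, g x) : x ∈ D}` of a function restricted to `D`, as a
binary relation. -/
def graphRelOn {α : Type*} (D : Set α) (g : α → α) : Set (Fin 2 → α) :=
  {t | t 0 ∈ D ∧ t 1 = g (t 0)}

/-- `R ⊆ α^k` is primitively positively definable from the set `𝒮` of
relations (of various arities) on `α`: `R` is the set of `k`-tuples `x` such
that there exist `m` witnesses `y` satisfying a finite conjunction of atomic
formulas, each of which is either an atom `S(z₁,…,z_r)` with `S ∈ 𝒮` or an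
equality `z = z'`, with variables among the entries of `x` and `y`. -/
def PPDefinable {α : Type*} (𝒮 : Set (Σ r : ℕ, Set (Fin r → α))) (k : ℕ)
    (R : Set (Fin k → α)) : Prop :=
  ∃ (m : ℕ) (C : List (Σ r : ℕ, Set (Fin r → α) × (Fin r → Fin (k + m))))
    (E : List (Fin (k + m) × Fin (k + m))),
    (∀ c ∈ C, (⟨c.1, c.2.1⟩ : Σ r : ℕ, Set (Fin r → α)) ∈ 𝒮) ∧
    R = {x | ∃ y : Fin m → α,
      (∀ c ∈ C, (fun j => Fin.append x y (c.2.2 j)) ∈ c.2.1) ∧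
      (∀ e ∈ E, Fin.append x y e.1 = Fin.append x y e.2)}


/-! ### Auxiliary development -/

section PPCombinators
variable {α : Type*} {𝒮 : Set (Σ r : ℕ, Set (Fin r → α))}

lemma append_comb {k m : ℕ} (g : α → α → α → α) (x₁ x₂ x₃ : Fin k → α)
    (y₁ y₂ y₃ : Fin m → α) (v : Fin (k + m)) :
    Fin.append (fun i => g (x₁ i) (x₂ i) (x₃ i)) (fun i => g (y₁ i) (y₂ i) (y₃ i)) v
      = g (Fin.append x₁ y₁ v) (Fin.append x₂ y₂ v) (Fin.append x₃ y₃ v) := by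
  induction v using Fin.addCases with
  | left i => simp [Fin.append_left]
  | right i => simp [Fin.append_right]

lemma ppdef_preserves (f : α → α → α → α) (h𝒮 : ∀ p ∈ 𝒮, PreservesSet f p.2)
    {k : ℕ} {R : Set (Fin k → α)} (hR : PPDefinable 𝒮 k R) : PreservesSet f R := by
  obtain ⟨m, C, E, hC, rfl⟩ := hR
  intro t₁ t₂ t₃ h₁ h₂ h₃
  obtain ⟨y₁, hc₁, he₁⟩ := h₁
  obtain ⟨y₂, hc₂, he₂⟩ := h₂
  obtain ⟨y₃, hc₃, he₃⟩ := h₃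
  refine ⟨fun i => f (y₁ i) (y₂ i) (y₃ i), fun c hc => ?_, fun e he => ?_⟩
  · have := h𝒮 _ (hC c hc) _ _ _ (hc₁ c hc) (hc₂ c hc) (hc₃ c hc)
    convert this using 1
    funext j
    exact append_comb f t₁ t₂ t₃ y₁ y₂ y₃ (c.2.2 j)
  · rw [append_comb f t₁ t₂ t₃ y₁ y₂ y₃ e.1, append_comb f t₁ t₂ t₃ y₁ y₂ y₃ e.2,
      he₁ e he, he₂ e he, he₃ e he]

lemma ppdef_congr {k : ℕ} {R R' : Set (Fin k → α)} (h : PPDefinable 𝒮 k R)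
    (hRR : R = R') : PPDefinable 𝒮 k R' := hRR ▸ h

lemma ppdef_base {k : ℕ} {R : Set (Fin k → α)} (h : (⟨k, R⟩ : Σ r : ℕ, Set (Fin r → α)) ∈ 𝒮) :
    PPDefinable 𝒮 k R := by
  refine ⟨0, [⟨k, (R, Fin.castAdd 0)⟩], [], ?_, ?_⟩
  · simpa using h
  · ext x
    simp only [Set.mem_setOf_eq, List.mem_singleton]
    constructor
    · intro hx
      refine ⟨Fin.elim0, fun c hc => ?_, fun e he => absurd he List.not_mem_nil⟩
      subst hc
      have : (fun j => Fin.append x Fin.elim0 (Fin.castAdd 0 j)) = x :=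
        funext fun j => Fin.append_left x Fin.elim0 j
      exact this.symm ▸ hx
    · rintro ⟨y, hc, -⟩
      have h2 := hc _ rfl
      have : (fun j => Fin.append x y (Fin.castAdd 0 j)) = x :=
        funext fun j => Fin.append_left x y j
      exact this ▸ h2

lemma ppdef_univ {k : ℕ} : PPDefinable 𝒮 k (Set.univ : Set (Fin k → α)) := by
  refine ⟨0, [], [], by simp, ?_⟩
  ext x
  simp only [Set.mem_univ, Set.mem_setOf_eq, List.not_mem_nil, true_iff]
  exact ⟨Fin.elim0, fun c hc => hc.elim, fun e he => he.elim⟩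

lemma ppdef_unary {k : ℕ} {X : Set α} (i : Fin k)
    (h : (⟨1, unaryRel X⟩ : Σ r : ℕ, Set (Fin r → α)) ∈ 𝒮) :
    PPDefinable 𝒮 k {x : Fin k → α | x i ∈ X} := by
  refine ⟨0, [⟨1, (unaryRel X, fun _ => Fin.castAdd 0 i)⟩], [], by simpa using h, ?_⟩
  ext x
  simp only [Set.mem_setOf_eq, List.mem_singleton]
  constructor
  · intro hx
    refine ⟨Fin.elim0, fun c hc => ?_, fun e he => absurd he List.not_mem_nil⟩
    subst hc
    show Fin.append x Fin.elim0 (Fin.castAdd 0 i) ∈ X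
    rw [Fin.append_left]
    exact hx
  · rintro ⟨y, hc, -⟩
    have h2 := hc _ rfl
    have h3 : Fin.append x y (Fin.castAdd 0 i) ∈ X := h2
    rwa [Fin.append_left] at h3

lemma fin_split {l m : ℕ} (y : Fin (l + m) → α) :
    y = Fin.append (fun u => y (Fin.castAdd m u)) (fun v => y (Fin.natAdd l v)) := by
  funext t
  induction t using Fin.addCases with
  | left i => simp [Fin.append_left]
  | right i => simp [Fin.append_right]

lemma ppdef_splice {k' k l : ℕ} {R' : Set (Fin k' → α)} (hR' : PPDefinable 𝒮 k' R')
    (g : Fin k' → Fin (k + l))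
    (D : List (Σ r : ℕ, Set (Fin r → α) × (Fin r → Fin (k + l))))
    (hD : ∀ d ∈ D, (⟨d.1, d.2.1⟩ : Σ r : ℕ, Set (Fin r → α)) ∈ 𝒮) :
    PPDefinable 𝒮 k {x | ∃ z : Fin l → α,
      (∀ d ∈ D, (fun j => Fin.append x z (d.2.2 j)) ∈ d.2.1) ∧
      (fun j => Fin.append x z (g j)) ∈ R'} := by
  obtain ⟨m, C, E, hC, rfl⟩ := hR'
  set emb : Fin (k + l) → Fin (k + (l + m)) :=
    Fin.addCases (fun j : Fin k => Fin.castAdd (l + m) j)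
      (fun u : Fin l => Fin.natAdd k (Fin.castAdd m u)) with hembdef
  set ρ : Fin (k' + m) → Fin (k + (l + m)) :=
    Fin.addCases (fun v : Fin k' => emb (g v))
      (fun w : Fin m => Fin.natAdd k (Fin.natAdd l w)) with hρdef
  have hemb : ∀ (x : Fin k → α) (z : Fin l → α) (w : Fin m → α) (t : Fin (k + l)),
      Fin.append x (Fin.append z w) (emb t) = Fin.append x z t := by
    intro x z w t
    induction t using Fin.addCases with
    | left i => simp [hembdef, Fin.append_left]
    | right i => simp [hembdef, Fin.append_right, Fin.append_left]
  have hρ : ∀ (x : Fin k → α) (z : Fin l → α) (w : Fin m → α) (v : Fin (k' + m)),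
      Fin.append x (Fin.append z w) (ρ v)
        = Fin.append (fun j => Fin.append x z (g j)) w v := by
    intro x z w v
    induction v using Fin.addCases with
    | left i => simp only [hρdef, Fin.addCases_left]; rw [hemb, Fin.append_left]
    | right i =>
        simp only [hρdef, Fin.addCases_right]
        rw [Fin.append_right, Fin.append_right, Fin.append_right]
  refine ⟨l + m,
    D.map (fun d => ⟨d.1, (d.2.1, fun j => emb (d.2.2 j))⟩)
      ++ C.map (fun c => ⟨c.1, (c.2.1, fun j => ρ (c.2.2 j))⟩),
    E.map (fun e => (ρ e.1, ρ e.2)), ?_, ?_⟩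
  · intro c hc
    rcases List.mem_append.1 hc with h | h
    · obtain ⟨d, hd, rfl⟩ := List.mem_map.1 h
      exact hD d hd
    · obtain ⟨c₀, hc₀, rfl⟩ := List.mem_map.1 h
      exact hC c₀ hc₀
  · ext x
    simp only [Set.mem_setOf_eq]
    constructor
    · rintro ⟨z, hDat, w, hCw, hEw⟩
      refine ⟨Fin.append z w, fun c hc => ?_, fun e he => ?_⟩
      · rcases List.mem_append.1 hc with h | h
        · obtain ⟨d, hd, rfl⟩ := List.mem_map.1 h
          have : (fun j => Fin.append x (Fin.append z w) (emb (d.2.2 j)))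
              = fun j => Fin.append x z (d.2.2 j) := funext fun j => hemb x z w _
          exact this ▸ hDat d hd
        · obtain ⟨c₀, hc₀, rfl⟩ := List.mem_map.1 h
          have : (fun j => Fin.append x (Fin.append z w) (ρ (c₀.2.2 j)))
              = fun j => Fin.append (fun j' => Fin.append x z (g j')) w (c₀.2.2 j) :=
            funext fun j => hρ x z w _
          exact this ▸ hCw c₀ hc₀
      · obtain ⟨e₀, he₀, rfl⟩ := List.mem_map.1 he
        have h1 := hρ x z w e₀.1
        have h2 := hρ x z w e₀.2
        simp only [h1, h2]
        exact hEw e₀ he₀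
    · rintro ⟨y, hCy, hEy⟩
      set z : Fin l → α := fun u => y (Fin.castAdd m u) with hz
      set w : Fin m → α := fun v => y (Fin.natAdd l v) with hw
      have hy : y = Fin.append z w := fin_split y
      refine ⟨z, fun d hd => ?_, w, fun c hc => ?_, fun e he => ?_⟩
      · have := hCy ⟨d.1, (d.2.1, fun j => emb (d.2.2 j))⟩
          (List.mem_append.2 (Or.inl (List.mem_map.2 ⟨d, hd, rfl⟩)))
        rw [hy] at this
        have heq : (fun j => Fin.append x (Fin.append z w) (emb (d.2.2 j)))
            = fun j => Fin.append x z (d.2.2 j) := funext fun j => hemb x z w _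
        exact heq ▸ this
      · have := hCy ⟨c.1, (c.2.1, fun j => ρ (c.2.2 j))⟩
          (List.mem_append.2 (Or.inr (List.mem_map.2 ⟨c, hc, rfl⟩)))
        rw [hy] at this
        have heq : (fun j => Fin.append x (Fin.append z w) (ρ (c.2.2 j)))
            = fun j => Fin.append (fun j' => Fin.append x z (g j')) w (c.2.2 j) :=
          funext fun j => hρ x z w _
        exact heq ▸ this
      · have := hEy (ρ e.1, ρ e.2) (List.mem_map.2 ⟨e, he, rfl⟩)
        rw [hy] at this
        rw [hρ x z w e.1, hρ x z w e.2] at this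
        exact this

lemma ppdef_and {k : ℕ} {R₁ R₂ : Set (Fin k → α)} (h₁ : PPDefinable 𝒮 k R₁)
    (h₂ : PPDefinable 𝒮 k R₂) : PPDefinable 𝒮 k (R₁ ∩ R₂) := by
  obtain ⟨m₁, C₁, E₁, hC₁, rfl⟩ := h₁
  obtain ⟨m₂, C₂, E₂, hC₂, rfl⟩ := h₂
  set ρ₁ : Fin (k + m₁) → Fin (k + (m₁ + m₂)) :=
    Fin.addCases (fun j : Fin k => Fin.castAdd (m₁ + m₂) j)
      (fun w : Fin m₁ => Fin.natAdd k (Fin.castAdd m₂ w)) with hρ₁def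
  set ρ₂ : Fin (k + m₂) → Fin (k + (m₁ + m₂)) :=
    Fin.addCases (fun j : Fin k => Fin.castAdd (m₁ + m₂) j)
      (fun w : Fin m₂ => Fin.natAdd k (Fin.natAdd m₁ w)) with hρ₂def
  have hr₁ : ∀ (x : Fin k → α) (y₁ : Fin m₁ → α) (y₂ : Fin m₂ → α) (v : Fin (k + m₁)),
      Fin.append x (Fin.append y₁ y₂) (ρ₁ v) = Fin.append x y₁ v := by
    intro x y₁ y₂ v
    induction v using Fin.addCases with
    | left i => simp [hρ₁def, Fin.append_left]
    | right i => simp [hρ₁def, Fin.append_right, Fin.append_left]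
  have hr₂ : ∀ (x : Fin k → α) (y₁ : Fin m₁ → α) (y₂ : Fin m₂ → α) (v : Fin (k + m₂)),
      Fin.append x (Fin.append y₁ y₂) (ρ₂ v) = Fin.append x y₂ v := by
    intro x y₁ y₂ v
    induction v using Fin.addCases with
    | left i => simp [hρ₂def, Fin.append_left]
    | right i => simp [hρ₂def, Fin.append_right]
  refine ⟨m₁ + m₂,
    C₁.map (fun c => ⟨c.1, (c.2.1, fun j => ρ₁ (c.2.2 j))⟩)
      ++ C₂.map (fun c => ⟨c.1, (c.2.1, fun j => ρ₂ (c.2.2 j))⟩),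
    E₁.map (fun e => (ρ₁ e.1, ρ₁ e.2)) ++ E₂.map (fun e => (ρ₂ e.1, ρ₂ e.2)), ?_, ?_⟩
  · intro c hc
    rcases List.mem_append.1 hc with h | h
    · obtain ⟨c₀, hc₀, rfl⟩ := List.mem_map.1 h; exact hC₁ c₀ hc₀
    · obtain ⟨c₀, hc₀, rfl⟩ := List.mem_map.1 h; exact hC₂ c₀ hc₀
  · ext x
    simp only [Set.mem_inter_iff, Set.mem_setOf_eq]
    constructor
    · rintro ⟨⟨y₁, hCy₁, hEy₁⟩, ⟨y₂, hCy₂, hEy₂⟩⟩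
      refine ⟨Fin.append y₁ y₂, fun c hc => ?_, fun e he => ?_⟩
      · rcases List.mem_append.1 hc with h | h
        · obtain ⟨c₀, hc₀, rfl⟩ := List.mem_map.1 h
          have heq : (fun j => Fin.append x (Fin.append y₁ y₂) (ρ₁ (c₀.2.2 j)))
              = fun j => Fin.append x y₁ (c₀.2.2 j) := funext fun j => hr₁ x y₁ y₂ _
          exact heq ▸ hCy₁ c₀ hc₀
        · obtain ⟨c₀, hc₀, rfl⟩ := List.mem_map.1 h
          have heq : (fun j => Fin.append x (Fin.append y₁ y₂) (ρ₂ (c₀.2.2 j)))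
              = fun j => Fin.append x y₂ (c₀.2.2 j) := funext fun j => hr₂ x y₁ y₂ _
          exact heq ▸ hCy₂ c₀ hc₀
      · rcases List.mem_append.1 he with h | h
        · obtain ⟨e₀, he₀, rfl⟩ := List.mem_map.1 h
          rw [hr₁ x y₁ y₂ e₀.1, hr₁ x y₁ y₂ e₀.2]; exact hEy₁ e₀ he₀
        · obtain ⟨e₀, he₀, rfl⟩ := List.mem_map.1 h
          rw [hr₂ x y₁ y₂ e₀.1, hr₂ x y₁ y₂ e₀.2]; exact hEy₂ e₀ he₀
    · rintro ⟨y, hCy, hEy⟩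
      have hy : y = Fin.append (fun u => y (Fin.castAdd m₂ u)) (fun v => y (Fin.natAdd m₁ v)) :=
        fin_split y
      set y₁ : Fin m₁ → α := fun u => y (Fin.castAdd m₂ u)
      set y₂ : Fin m₂ → α := fun v => y (Fin.natAdd m₁ v)
      constructor
      · refine ⟨y₁, fun c hc => ?_, fun e he => ?_⟩
        · have := hCy ⟨c.1, (c.2.1, fun j => ρ₁ (c.2.2 j))⟩
            (List.mem_append.2 (Or.inl (List.mem_map.2 ⟨c, hc, rfl⟩)))
          rw [hy] at this
          have heq : (fun j => Fin.append x (Fin.append y₁ y₂) (ρ₁ (c.2.2 j)))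
              = fun j => Fin.append x y₁ (c.2.2 j) := funext fun j => hr₁ x y₁ y₂ _
          exact heq ▸ this
        · have := hEy (ρ₁ e.1, ρ₁ e.2)
            (List.mem_append.2 (Or.inl (List.mem_map.2 ⟨e, he, rfl⟩)))
          rw [hy] at this
          rw [hr₁ x y₁ y₂ e.1, hr₁ x y₁ y₂ e.2] at this; exact this
      · refine ⟨y₂, fun c hc => ?_, fun e he => ?_⟩
        · have := hCy ⟨c.1, (c.2.1, fun j => ρ₂ (c.2.2 j))⟩
            (List.mem_append.2 (Or.inr (List.mem_map.2 ⟨c, hc, rfl⟩)))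
          rw [hy] at this
          have heq : (fun j => Fin.append x (Fin.append y₁ y₂) (ρ₂ (c.2.2 j)))
              = fun j => Fin.append x y₂ (c.2.2 j) := funext fun j => hr₂ x y₁ y₂ _
          exact heq ▸ this
        · have := hEy (ρ₂ e.1, ρ₂ e.2)
            (List.mem_append.2 (Or.inr (List.mem_map.2 ⟨e, he, rfl⟩)))
          rw [hy] at this
          rw [hr₂ x y₁ y₂ e.1, hr₂ x y₁ y₂ e.2] at this; exact this

lemma ppdef_foldr {k : ℕ} (L : List (Set (Fin k → α)))
    (h : ∀ R ∈ L, PPDefinable 𝒮 k R) :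
    PPDefinable 𝒮 k (L.foldr (· ∩ ·) Set.univ) := by
  induction L with
  | nil => exact ppdef_univ
  | cons R L ihL =>
      exact ppdef_and (h R List.mem_cons_self)
        (ihL fun S hS => h S (List.mem_cons_of_mem _ hS))

lemma mem_foldr_inter {k : ℕ} (L : List (Set (Fin k → α))) (x : Fin k → α) :
    x ∈ L.foldr (· ∩ ·) Set.univ ↔ ∀ R ∈ L, x ∈ R := by
  induction L with
  | nil => simp
  | cons R L ih => simp [ih]

end PPCombinators

section AlgHelpers
variable {α : Type*} {f : α → α → α → α}

lemma cons_mem (hcons : IsConservativeOp f) {B : Set α} {x y z : α}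
    (hx : x ∈ B) (hy : y ∈ B) (hz : z ∈ B) : f x y z ∈ B := by
  rcases hcons x y z with h | h | h <;> rw [h] <;> assumption

lemma fullCongOn (hcons : IsConservativeOp f) (B : Set α) :
    IsCongOn f B (fun x y => x ∈ B ∧ y ∈ B) := by
  refine ⟨fun x y h => h, fun x hx => ⟨hx, hx⟩, fun x y h => ⟨h.2, h.1⟩,
    fun x y z h h' => ⟨h.1, h'.2⟩, ?_⟩
  intro a₁ b₁ a₂ b₂ a₃ b₃ h1 h2 h3
  exact ⟨cons_mem hcons h1.1 h2.1 h3.1, cons_mem hcons h1.2 h2.2 h3.2⟩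

lemma monolith (hcons : IsConservativeOp f) {B : Set α} {p q : α}
    (hp : p ∈ B) (hq : q ∈ B) (hpq : p ≠ q)
    (H : ∀ θ, IsCongOn f B θ → NontrivialRel θ → θ p q) : IsSIOn f B := by
  set μ : α → α → Prop := fun x y => ∀ θ, IsCongOn f B θ → θ p q → θ x y with hμdef
  have hμcong : IsCongOn f B μ := by
    refine ⟨fun x y h => h _ (fullCongOn hcons B) ⟨hp, hq⟩,
      fun x hx θ hθ _ => hθ.2.1 x hx,
      fun x y h θ hθ hpq' => hθ.2.2.1 x y (h θ hθ hpq'),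
      fun x y z h h' θ hθ hpq' => hθ.2.2.2.1 x y z (h θ hθ hpq') (h' θ hθ hpq'), ?_⟩
    intro a₁ b₁ a₂ b₂ a₃ b₃ h1 h2 h3 θ hθ hpq'
    exact hθ.2.2.2.2 _ _ _ _ _ _ (h1 θ hθ hpq') (h2 θ hθ hpq') (h3 θ hθ hpq')
  have hμnt : NontrivialRel μ := ⟨p, q, fun θ _ h => h, hpq⟩
  have hμatomic : IsAtomicCongOn f B μ := by
    refine ⟨hμcong, hμnt, fun θ' hθ' hnt' hle' x y => ?_⟩
    have hθ'pq : θ' p q := H θ' hθ' hnt'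
    exact ⟨fun h => hle' x y h, fun h => h θ' hθ' hθ'pq⟩
  refine ⟨μ, hμatomic, fun μ' hμ' x y => ?_⟩
  have hμ'pq : μ' p q := H μ' hμ'.1 hμ'.2.1
  have hle : RelLE μ μ' := fun a b h => h μ' hμ'.1 hμ'pq
  exact (hμ'.2.2 μ hμcong hμnt hle x y).symm

lemma image_preserves {k k' : ℕ} {U : Set (Fin k → α)} (hU : PreservesSet f U)
    (h : Fin k' → Fin k) : PreservesSet f ((fun t => fun j => t (h j)) '' U) := by
  rintro t₁ t₂ t₃ ⟨u₁, hu₁, rfl⟩ ⟨u₂, hu₂, rfl⟩ ⟨u₃, hu₃, rfl⟩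
  exact ⟨fun i => f (u₁ i) (u₂ i) (u₃ i), hU _ _ _ hu₁ hu₂ hu₃, rfl⟩

lemma exists_max {β : Type*} [Finite β] (F : Set (Set β)) (hne : F.Nonempty) :
    ∃ T ∈ F, ∀ S ∈ F, T ⊆ S → S = T := by
  obtain ⟨a, ha, h⟩ := Set.Finite.exists_maximalFor id F (Set.toFinite F) hne
  exact ⟨a, ha, fun S hS hsub => Set.Subset.antisymm (h hS hsub) hsub⟩

lemma exists_retract (hcons : IsConservativeOp f) {B : Set α} {η : α → α → Prop}
    (hη : IsCongOn f B η) :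
    ∃ e : α → α, (∀ x ∈ B, η x (e x)) ∧ (∀ x ∈ B, e x ∈ B) ∧
      (∀ a ∈ B, ∀ b ∈ B, η a b → e a = e b) := by
  classical
  refine ⟨fun x => if h : x ∈ B then Classical.choose (⟨x, hη.2.1 x h⟩ : ∃ y, η x y)
    else x, ?_, ?_, ?_⟩
  · intro x hx
    simp only [dif_pos hx]
    exact Classical.choose_spec (⟨x, hη.2.1 x hx⟩ : ∃ y, η x y)
  · intro x hx
    simp only [dif_pos hx]
    exact (hη.1 _ _ (Classical.choose_spec (⟨x, hη.2.1 x hx⟩ : ∃ y, η x y))).2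
  · intro a ha b hb hab
    simp only [dif_pos ha, dif_pos hb]
    have hpred : η a = η b := funext fun y => propext
      ⟨fun h => hη.2.2.2.1 _ _ _ (hη.2.2.1 _ _ hab) h, fun h => hη.2.2.2.1 _ _ _ hab h⟩
    have key : ∀ (p q : α → Prop) (hp : ∃ y, p y) (hq : ∃ y, q y), p = q →
        Classical.choose hp = Classical.choose hq := by
      rintro p q hp hq rfl; rfl
    exact key _ _ _ _ hpred

end AlgHelpers

/-- The generating set of relations. -/
def genSet {α : Type*} (f : α → α → α → α) : Set (Σ r : ℕ, Set (Fin r → α)) :=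
  {p : Σ r : ℕ, Set (Fin r → α) |
    (∃ X : Set α, p = ⟨1, unaryRel X⟩) ∨
    (∃ (A' B : Set α) (e : α → α), B ⊆ A' ∧ IsSIOn f B ∧
      (∀ x ∈ A', e x ∈ B) ∧ (∀ b ∈ B, ∃ x ∈ A', e x = b) ∧
      (∀ x ∈ A', ∀ y ∈ A', ∀ z ∈ A',
        e (f x y z) = f (e x) (e y) (e z)) ∧
      (∀ b ∈ B, e b = b) ∧ p = ⟨2, graphRelOn A' e⟩) ∨
    (∃ n : ℕ, 2 ≤ n ∧ ∃ (A : Fin n → Set α) (T : Set (Fin n → α)),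
      (∀ i, IsSIOn f (A i)) ∧
      (∀ t ∈ T, ∀ i, t i ∈ A i) ∧
      PreservesSet f T ∧
      (∀ (i : Fin n), ∀ a ∈ A i, ∃ t ∈ T, t i = a) ∧
      (∀ t ∈ T, ∀ t' ∈ T, ∀ i : Fin n,
        (∀ j, j ≠ i → t j = t' j) → t = t') ∧
      (∃ s : Fin n → α, (∀ i, s i ∈ A i) ∧ s ∉ T ∧
        (∀ S : Set (Fin n → α), (∀ t ∈ S, ∀ i, t i ∈ A i) →
          PreservesSet f S → T ⊂ S → s ∈ S) ∧
        (∀ i : Fin n, ∃ t ∈ T, ∀ j, j ≠ i → t j = s j)) ∧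
      p = ⟨n, T⟩)}

/-- The induction measure. -/
noncomputable def pmeas {α : Type*} [Fintype α] (k : ℕ) (U : Set (Fin k → α)) : ℕ :=
  k * (Fintype.card α + 1) + ∑ i : Fin k, ((fun t => t i) '' U).ncard

lemma main_ppdef {α : Type*} [Fintype α] {f : α → α → α → α}
    (hcons : IsConservativeOp f) (hmin : IsMinorityOp f) :
    ∀ (M k : ℕ) (U : Set (Fin k → α)), pmeas k U < M → 1 ≤ k →
      PreservesSet f U → PPDefinable (genSet f) k U := by
  intro M
  induction M with
  | zero => intro k U h _ _; omega
  | succ M ih =>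
    intro k U hlt hk hU
    classical
    have sep : ∀ s, s ∉ U → ∃ P : Set (Fin k → α),
        PPDefinable (genSet f) k P ∧ U ⊆ P ∧ s ∉ P := by
      intro s hs
      by_cases hc1 : ∀ i, s i ∈ (fun t => t i) '' U
      · -- every coordinate of s is in the projection
        have hk2 : 2 ≤ k := by
          by_contra hlt2
          have hk1 : k = 1 := by omega
          subst hk1
          obtain ⟨u, huU, hu⟩ := hc1 0
          have : u = s := funext fun j => by rw [Subsingleton.elim j 0]; exact hu
          exact hs (this ▸ huU)
        by_cases hc2 : ∀ i : Fin k, ∃ t ∈ U, ∀ j, j ≠ i → t j = s j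
        · -- all coordinates essential: the critical-relation case
          obtain ⟨T, hTF, hTmax⟩ := exists_max
            {S : Set (Fin k → α) | PreservesSet f S ∧
              (∀ t ∈ S, ∀ j, t j ∈ (fun t : Fin k → α => t j) '' U) ∧ U ⊆ S ∧ s ∉ S}
            ⟨U, hU, fun t ht j => Set.mem_image_of_mem _ ht, subset_rfl, hs⟩
          obtain ⟨hTpres, hTmem, hUT, hsT⟩ := hTF
          have hcrit : ∀ S : Set (Fin k → α),
              (∀ t ∈ S, ∀ j, t j ∈ (fun t : Fin k → α => t j) '' U) →
              PreservesSet f S → T ⊂ S → s ∈ S := by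
            intro S hSprod hSpres hTS
            by_contra hsS
            have hST : S = T :=
              hTmax S ⟨hSpres, hSprod, hUT.trans hTS.subset, hsS⟩ hTS.subset
            rw [hST] at hTS
            exact (lt_irrefl _ hTS)
          have hBmem : ∀ (j : Fin k) (a : α), a ∈ (fun t : Fin k → α => t j) '' U →
              ∃ t ∈ T, t j = a := by
            intro j a ha
            obtain ⟨u, hu, rfl⟩ := ha
            exact ⟨u, hUT hu, rfl⟩
          have htstar : ∀ i : Fin k, ∃ t ∈ T, ∀ j, j ≠ i → t j = s j := by
            intro i
            obtain ⟨t, htU, hjt⟩ := hc2 i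
            exact ⟨t, hUT htU, hjt⟩
          by_cases hfun : ∃ i : Fin k, ∃ t ∈ T, ∃ t' ∈ T,
              (∀ j, j ≠ i → t j = t' j) ∧ t i ≠ t' i
          · -- Case 3a: some coordinate is non-functional; retract it
            obtain ⟨i, w, hwT, w', hw'T, hwag, hwne⟩ := hfun
            obtain ⟨tst, htstT, htsts⟩ := htstar i
            set σ : α → α → Prop := fun a b => ∃ t ∈ T, ∃ t' ∈ T,
              (∀ j, j ≠ i → t j = t' j) ∧ t i = a ∧ t' i = b with hσdef
            have hσcong : IsCongOn f ((fun t : Fin k → α => t i) '' U) σ := by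
              refine ⟨?_, ?_, ?_, ?_, ?_⟩
              · rintro a b ⟨t, ht, t', ht', hag, rfl, rfl⟩
                exact ⟨hTmem t ht i, hTmem t' ht' i⟩
              · intro a ha
                obtain ⟨t, htT, hti⟩ := hBmem i a ha
                exact ⟨t, htT, t, htT, fun _ _ => rfl, hti, hti⟩
              · rintro a b ⟨t, ht, t', ht', hag, rfl, rfl⟩
                exact ⟨t', ht', t, ht, fun j hj => (hag j hj).symm, rfl, rfl⟩
              · rintro a b c ⟨t, ht, t', ht', hag, rfl, rfl⟩ ⟨u, hu, u', hu', hag', hui, rfl⟩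
                refine ⟨fun j => f (u j) (t' j) (t j),
                  hTpres _ _ _ hu ht' ht, u', hu', ?_, ?_, rfl⟩
                · intro j hj
                  show f (u j) (t' j) (t j) = u' j
                  rw [← hag j hj, (hmin (t j) (u j)).2.2]
                  exact hag' j hj
                · show f (u i) (t' i) (t i) = t i
                  rw [hui, (hmin (t' i) (t i)).1]
              · rintro a₁ b₁ a₂ b₂ a₃ b₃ ⟨t₁, h₁, t₁', h₁', hg₁, rfl, rfl⟩
                  ⟨t₂, h₂, t₂', h₂', hg₂, rfl, rfl⟩ ⟨t₃, h₃, t₃', h₃', hg₃, rfl, rfl⟩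
                exact ⟨fun j => f (t₁ j) (t₂ j) (t₃ j), hTpres _ _ _ h₁ h₂ h₃,
                  fun j => f (t₁' j) (t₂' j) (t₃' j), hTpres _ _ _ h₁' h₂' h₃',
                  fun j hj => by
                    show f (t₁ j) (t₂ j) (t₃ j) = f (t₁' j) (t₂' j) (t₃' j)
                    rw [hg₁ j hj, hg₂ j hj, hg₃ j hj], rfl, rfl⟩
            have hfiber : ∀ t ∈ T, (∀ j, j ≠ i → t j = s j) → σ (t i) (tst i) :=
              fun t ht hag => ⟨t, ht, tst, htstT,
                fun j hj => (hag j hj).trans (htsts j hj).symm, rfl, rfl⟩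
            have hnotσ : ¬ σ (tst i) (s i) := by
              rintro ⟨t, ht, t', ht', hag, hti, ht'i⟩
              apply hsT
              have hmem2 := hTpres _ _ _ htstT ht ht'
              have heq : (fun j => f (tst j) (t j) (t' j)) = s := by
                funext j
                by_cases hj : j = i
                · rw [hj, hti, ht'i, (hmin (tst i) (s i)).1]
                · rw [hag j hj, (hmin (t' j) (tst j)).2.2, htsts j hj]
              exact heq ▸ hmem2
            -- maximal congruence η ⊇ σ avoiding (tst i, s i)
            have hFne : ({Θ : Set (α × α) |
                IsCongOn f ((fun t : Fin k → α => t i) '' U) (fun a b => (a, b) ∈ Θ) ∧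
                (∀ a b, σ a b → (a, b) ∈ Θ) ∧ (tst i, s i) ∉ Θ}).Nonempty :=
              ⟨{p | σ p.1 p.2}, hσcong, fun a b h => h, hnotσ⟩
            obtain ⟨Θ, ⟨hηcong, hση, hηns⟩, hηmax'⟩ := exists_max _ hFne
            set η : α → α → Prop := fun a b => (a, b) ∈ Θ with hηdef
            obtain ⟨hdomη, hreflη, hsymmη, htransη, hpresη⟩ := hηcong
            have hηmax : ∀ θ : α → α → Prop,
                IsCongOn f ((fun t : Fin k → α => t i) '' U) θ →
                (∀ a b, η a b → θ a b) → ¬ θ (tst i) (s i) → ∀ a b, θ a b → η a b := by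
              intro θ hθ hle hns a b hab
              have heqΘ : {p : α × α | θ p.1 p.2} = Θ :=
                hηmax' {p | θ p.1 p.2}
                  ⟨hθ, fun a b hσab => hle a b (hση a b hσab), hns⟩
                  (fun p hp => hle p.1 p.2 hp)
              show (a, b) ∈ Θ
              rw [← heqΘ]
              exact hab
            have hηnt : η (w i) (w' i) := hση _ _ ⟨w, hwT, w', hw'T, hwag, rfl, rfl⟩
            obtain ⟨e, he1, he2, he3⟩ := exists_retract hcons
              (⟨hdomη, hreflη, hsymmη, htransη, hpresη⟩ :
                IsCongOn f ((fun t : Fin k → α => t i) '' U) η)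
            set B₀ : Set α := e '' ((fun t : Fin k → α => t i) '' U) with hB₀def
            have hB₀sub : B₀ ⊆ (fun t : Fin k → α => t i) '' U := by
              rintro b ⟨x, hx, rfl⟩; exact he2 x hx
            have hefix : ∀ b ∈ B₀, e b = b := by
              rintro b ⟨x, hx, rfl⟩
              exact (he3 x hx (e x) (he2 x hx) (he1 x hx)).symm
            have heinj : ∀ a ∈ (fun t : Fin k → α => t i) '' U,
                ∀ b ∈ (fun t : Fin k → α => t i) '' U, e a = e b → η a b := by
              intro a ha b hb heq
              have h4 : η (e a) b := by rw [heq]; exact hsymmη _ _ (he1 b hb)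
              exact htransη _ _ _ (he1 a ha) h4
            have hhom : ∀ x ∈ (fun t : Fin k → α => t i) '' U,
                ∀ y ∈ (fun t : Fin k → α => t i) '' U,
                ∀ z ∈ (fun t : Fin k → α => t i) '' U,
                e (f x y z) = f (e x) (e y) (e z) := by
              intro x hx y hy z hz
              have hu : f (e x) (e y) (e z) ∈ B₀ := by
                rcases hcons (e x) (e y) (e z) with h | h | h <;> rw [h]
                exacts [⟨x, hx, rfl⟩, ⟨y, hy, rfl⟩, ⟨z, hz, rfl⟩]
              have hη2 : η (f x y z) (f (e x) (e y) (e z)) :=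
                hpresη _ _ _ _ _ _ (he1 x hx) (he1 y hy) (he1 z hz)
              have h5 := he3 _ (cons_mem hcons hx hy hz) _ (hB₀sub hu) hη2
              rw [h5, hefix _ hu]
            have htstBi : tst i ∈ (fun t : Fin k → α => t i) '' U := hTmem tst htstT i
            have hpB₀ : e (tst i) ∈ B₀ := ⟨tst i, htstBi, rfl⟩
            have hqB₀ : e (s i) ∈ B₀ := ⟨s i, hc1 i, rfl⟩
            have hpq : e (tst i) ≠ e (s i) :=
              fun h => hηns (heinj _ htstBi _ (hc1 i) h)
            have hSIB₀ : IsSIOn f B₀ := by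
              refine monolith hcons hpB₀ hqB₀ hpq ?_
              intro θ hθ hθnt
              obtain ⟨hdθ, hrθ, hsθ, htθ, hpθ⟩ := hθ
              set θh : α → α → Prop := fun x y => x ∈ (fun t : Fin k → α => t i) '' U ∧
                y ∈ (fun t : Fin k → α => t i) '' U ∧ θ (e x) (e y) with hθhdef
              have hθhcong : IsCongOn f ((fun t : Fin k → α => t i) '' U) θh := by
                refine ⟨fun x y h => ⟨h.1, h.2.1⟩,
                  fun x hx => ⟨hx, hx, hrθ _ ⟨x, hx, rfl⟩⟩,
                  fun x y h => ⟨h.2.1, h.1, hsθ _ _ h.2.2⟩,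
                  fun x y z h h' => ⟨h.1, h'.2.1, htθ _ _ _ h.2.2 h'.2.2⟩, ?_⟩
                intro a₁ b₁ a₂ b₂ a₃ b₃ h1 h2 h3
                refine ⟨cons_mem hcons h1.1 h2.1 h3.1,
                  cons_mem hcons h1.2.1 h2.2.1 h3.2.1, ?_⟩
                rw [hhom _ h1.1 _ h2.1 _ h3.1, hhom _ h1.2.1 _ h2.2.1 _ h3.2.1]
                exact hpθ _ _ _ _ _ _ h1.2.2 h2.2.2 h3.2.2
              have hηθh : ∀ a b, η a b → θh a b := by
                intro a b hab
                obtain ⟨ha, hb⟩ := hdomη a b hab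
                exact ⟨ha, hb, by rw [he3 a ha b hb hab]; exact hrθ _ ⟨b, hb, rfl⟩⟩
              by_cases hns : θh (tst i) (s i)
              · exact hns.2.2
              · exfalso
                have hback := hηmax θh hθhcong hηθh hns
                obtain ⟨u, v, huv, hune⟩ := hθnt
                have huB₀ := (hdθ _ _ huv).1
                have hvB₀ := (hdθ _ _ huv).2
                have hηuv : η u v := hback u v
                  ⟨hB₀sub huB₀, hB₀sub hvB₀,
                    by rw [hefix u huB₀, hefix v hvB₀]; exact huv⟩
                exact hune (by
                  rw [← hefix u huB₀, ← hefix v hvB₀,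
                    he3 _ (hB₀sub huB₀) _ (hB₀sub hvB₀) hηuv])
            have hgmem : (⟨2, graphRelOn ((fun t : Fin k → α => t i) '' U) e⟩ :
                Σ r : ℕ, Set (Fin r → α)) ∈ genSet f := by
              refine Or.inr (Or.inl ⟨(fun t : Fin k → α => t i) '' U, B₀, e, hB₀sub,
                hSIB₀, fun x hx => ⟨x, hx, rfl⟩, ?_, hhom, hefix, rfl⟩)
              rintro b ⟨x, hx, rfl⟩
              exact ⟨x, hx, rfl⟩
            -- the retracted relation T₀
            set T₀ : Set (Fin k → α) :=
              (fun t => Function.update t i (e (t i))) '' T with hT₀def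
            have hT₀pres : PreservesSet f T₀ := by
              rintro u₁ u₂ u₃ ⟨t₁, h₁, rfl⟩ ⟨t₂, h₂, rfl⟩ ⟨t₃, h₃, rfl⟩
              refine ⟨fun j => f (t₁ j) (t₂ j) (t₃ j), hTpres _ _ _ h₁ h₂ h₃, ?_⟩
              funext j
              show Function.update (fun j' => f (t₁ j') (t₂ j') (t₃ j')) i
                  (e (f (t₁ i) (t₂ i) (t₃ i))) j
                = f (Function.update t₁ i (e (t₁ i)) j)
                  (Function.update t₂ i (e (t₂ i)) j)
                  (Function.update t₃ i (e (t₃ i)) j)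
              by_cases hj : j = i
              · rw [hj, Function.update_self, Function.update_self,
                  Function.update_self, Function.update_self]
                exact hhom _ (hTmem t₁ h₁ i) _ (hTmem t₂ h₂ i) _ (hTmem t₃ h₃ i)
              · rw [Function.update_of_ne hj, Function.update_of_ne hj,
                  Function.update_of_ne hj, Function.update_of_ne hj]
            have hstrict : ((fun t : Fin k → α => t i) '' T₀).ncard
                < ((fun t : Fin k → α => t i) '' U).ncard := by
              apply Set.ncard_lt_ncard ?_ (Set.toFinite _)
              refine ssubset_of_subset_of_ssubset ?_
                (hB₀sub.ssubset_of_ne ?_)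
              · rintro a ⟨u, ⟨t, ht, rfl⟩, rfl⟩
                show Function.update t i (e (t i)) i ∈ B₀
                rw [Function.update_self]
                exact ⟨t i, hTmem t ht i, rfl⟩
              · intro hEq
                have hwfix := hefix (w i) (hEq ▸ hTmem w hwT i)
                have hw'fix := hefix (w' i) (hEq ▸ hTmem w' hw'T i)
                have heww' : e (w i) = e (w' i) :=
                  he3 _ (hTmem w hwT i) _ (hTmem w' hw'T i) hηnt
                exact hwne (by rw [← hwfix, heww', hw'fix])
            have hle2 : ∀ j : Fin k, ((fun t : Fin k → α => t j) '' T₀).ncard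
                ≤ ((fun t : Fin k → α => t j) '' U).ncard := by
              intro j
              apply Set.ncard_le_ncard ?_ (Set.toFinite _)
              rintro a ⟨u, ⟨t, ht, rfl⟩, rfl⟩
              show Function.update t i (e (t i)) j ∈ (fun t : Fin k → α => t j) '' U
              by_cases hj : j = i
              · rw [hj, Function.update_self]
                exact hB₀sub ⟨t i, hTmem t ht i, rfl⟩
              · rw [Function.update_of_ne hj]
                exact hTmem t ht j
            have hsum2 : ∑ j : Fin k, ((fun t : Fin k → α => t j) '' T₀).ncard
                < ∑ j : Fin k, ((fun t : Fin k → α => t j) '' U).ncard :=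
              Finset.sum_lt_sum (fun j _ => hle2 j) ⟨i, Finset.mem_univ i, hstrict⟩
            have hmeas : pmeas k T₀ < M := by
              have h4 : pmeas k T₀ < pmeas k U := Nat.add_lt_add_left hsum2 _
              exact lt_of_lt_of_le h4 (Nat.lt_succ_iff.mp hlt)
            have hppT₀ := ih k T₀ hmeas hk hT₀pres
            have hP := ppdef_splice (k := k) (l := 1) hppT₀
              (fun j => if j = i then Fin.natAdd k 0 else Fin.castAdd 1 j)
              [⟨2, (graphRelOn ((fun t : Fin k → α => t i) '' U) e,
                fun j : Fin 2 => if j = 0 then Fin.castAdd 1 i else Fin.natAdd k 0)⟩]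
              (by
                intro d hd
                rw [List.mem_singleton] at hd
                subst hd
                exact hgmem)
            refine ⟨_, hP, ?_, ?_⟩
            · intro u huU
              have huT := hUT huU
              refine ⟨fun _ => e (u i), fun d hd => ?_, ?_⟩
              · rw [List.mem_singleton] at hd
                subst hd
                refine ⟨?_, ?_⟩
                · show Fin.append u (fun _ => e (u i))
                    (if (0 : Fin 2) = 0 then Fin.castAdd 1 i else Fin.natAdd k 0)
                      ∈ (fun t : Fin k → α => t i) '' U
                  rw [if_pos rfl, Fin.append_left]
                  exact hTmem u huT i
                · show Fin.append u (fun _ => e (u i))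
                    (if (1 : Fin 2) = 0 then Fin.castAdd 1 i else Fin.natAdd k 0)
                    = e (Fin.append u (fun _ => e (u i))
                      (if (0 : Fin 2) = 0 then Fin.castAdd 1 i else Fin.natAdd k 0))
                  rw [if_pos rfl, if_neg (by decide), Fin.append_right, Fin.append_left]
              · show (fun j => Fin.append u (fun _ => e (u i))
                  (if j = i then Fin.natAdd k 0 else Fin.castAdd 1 j)) ∈ T₀
                refine ⟨u, huT, ?_⟩
                funext j
                show Function.update u i (e (u i)) j
                  = Fin.append u (fun _ => e (u i))
                    (if j = i then Fin.natAdd k 0 else Fin.castAdd 1 j)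
                by_cases hj : j = i
                · rw [hj, Function.update_self, if_pos rfl, Fin.append_right]
                · rw [Function.update_of_ne hj, if_neg hj, Fin.append_left]
            · rintro ⟨z, hat, hmem2⟩
              have hgr := hat _ (List.mem_singleton.2 rfl)
              have hgr1 : Fin.append s z
                  (if (1 : Fin 2) = 0 then Fin.castAdd 1 i else Fin.natAdd k 0)
                  = e (Fin.append s z
                    (if (0 : Fin 2) = 0 then Fin.castAdd 1 i else Fin.natAdd k 0)) :=
                hgr.2
              rw [if_pos rfl, if_neg (by decide), Fin.append_right, Fin.append_left]
                at hgr1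
              obtain ⟨t, htT, hteq0⟩ := hmem2
              have hteq : Function.update t i (e (t i))
                  = fun j => Fin.append s z
                    (if j = i then Fin.natAdd k 0 else Fin.castAdd 1 j) := hteq0
              have hagree : ∀ j, j ≠ i → t j = s j := by
                intro j hj
                have hcf := congrFun hteq j
                rw [Function.update_of_ne hj] at hcf
                rw [hcf]
                show Fin.append s z (if j = i then Fin.natAdd k 0 else Fin.castAdd 1 j)
                  = s j
                rw [if_neg hj, Fin.append_left]
              have hei : e (t i) = e (s i) := by
                have hcf := congrFun hteq i
                rw [Function.update_self] at hcf
                rw [hcf]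
                show Fin.append s z (if i = i then Fin.natAdd k 0 else Fin.castAdd 1 i)
                  = e (s i)
                rw [if_pos rfl, Fin.append_right]
                exact hgr1
              have hηts : η (t i) (s i) := heinj _ (hTmem t htT i) _ (hc1 i) hei
              have hηta : η (t i) (tst i) := hση _ _ (hfiber t htT hagree)
              exact hηns (htransη _ _ _ (hsymmη _ _ hηta) hηts)
          · -- Case 3b: T is functional; it is itself a generating relation
            push_neg at hfun
            have hfunc : ∀ t ∈ T, ∀ t' ∈ T, ∀ i : Fin k,
                (∀ j, j ≠ i → t j = t' j) → t = t' := by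
              intro t ht t' ht' i hag
              funext j
              by_cases hj : j = i
              · subst hj
                exact hfun j t ht t' ht' hag
              · exact hag j hj
            have hSIB : ∀ i : Fin k, IsSIOn f ((fun t : Fin k → α => t i) '' U) := by
              intro i
              obtain ⟨tst, htstT, htsts⟩ := htstar i
              have htne : tst i ≠ s i := by
                intro h
                apply hsT
                have heq : tst = s := funext fun j => by
                  by_cases hj : j = i
                  · subst hj; exact h
                  · exact htsts j hj
                exact heq ▸ htstT
              refine monolith hcons (hTmem tst htstT i) (hc1 i) htne ?_
              intro θ hθ hθnt
              obtain ⟨hdom, hrefl, hsymm, htrans, hpresθ⟩ := hθ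
              have hsS : s ∈ {u : Fin k → α | ∃ t ∈ T,
                  (∀ j, j ≠ i → u j = t j) ∧ θ (t i) (u i)} := by
                apply hcrit
                · rintro u ⟨t, htT, hag, hθu⟩ j
                  by_cases hj : j = i
                  · subst hj; exact (hdom _ _ hθu).2
                  · rw [hag j hj]; exact hTmem t htT j
                · rintro u₁ u₂ u₃ ⟨t₁, ht₁, hag₁, hθ₁⟩ ⟨t₂, ht₂, hag₂, hθ₂⟩
                    ⟨t₃, ht₃, hag₃, hθ₃⟩
                  exact ⟨fun j => f (t₁ j) (t₂ j) (t₃ j), hTpres _ _ _ ht₁ ht₂ ht₃,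
                    fun j hj => by
                      show f (u₁ j) (u₂ j) (u₃ j) = f (t₁ j) (t₂ j) (t₃ j)
                      rw [hag₁ j hj, hag₂ j hj, hag₃ j hj],
                    hpresθ _ _ _ _ _ _ hθ₁ hθ₂ hθ₃⟩
                · have hsub2 : T ⊆ {u : Fin k → α | ∃ t ∈ T,
                      (∀ j, j ≠ i → u j = t j) ∧ θ (t i) (u i)} :=
                    fun t ht => ⟨t, ht, fun j _ => rfl, hrefl _ (hTmem t ht i)⟩
                  refine (Set.ssubset_iff_of_subset hsub2).2 ?_
                  obtain ⟨a, b, hab, hne⟩ := hθnt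
                  obtain ⟨t, htT, hti⟩ := hBmem i a (hdom _ _ hab).1
                  refine ⟨Function.update t i b, ⟨t, htT,
                    fun j hj => Function.update_of_ne hj _ _,
                    by rw [Function.update_self, hti]; exact hab⟩, ?_⟩
                  intro hmem2
                  have heq := hfunc _ hmem2 t htT i
                    (fun j hj => Function.update_of_ne hj _ _)
                  have hb : b = t i := by
                    conv_lhs => rw [← Function.update_self i b t, heq]
                  exact hne (hb.trans hti).symm
              obtain ⟨t, htT, hag, hθt⟩ := hsS
              have heqt : t = tst := hfunc t htT tst htstT i
                (fun j hj => (hag j hj).symm.trans (htsts j hj).symm)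
              rw [heqt] at hθt
              exact hθt
            have hTmemS : (⟨k, T⟩ : Σ r : ℕ, Set (Fin r → α)) ∈ genSet f :=
              Or.inr (Or.inr ⟨k, hk2, fun i => (fun t : Fin k → α => t i) '' U, T,
                hSIB, hTmem, hTpres, hBmem, hfunc,
                ⟨s, hc1, hsT, hcrit, htstar⟩, rfl⟩)
            exact ⟨T, ppdef_base hTmemS, hUT, hsT⟩
        · -- some coordinate inessential: project it away
          push_neg at hc2
          obtain ⟨i, hi⟩ := hc2
          obtain ⟨n, rfl⟩ : ∃ n, k = n + 1 := ⟨k - 1, by omega⟩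
          have hn1 : 1 ≤ n := by omega
          set U' : Set (Fin n → α) := (fun t => fun j => t (i.succAbove j)) '' U with hU'def
          have hU' : PreservesSet f U' := image_preserves hU _
          have himg : ∀ j : Fin n,
              (fun t : Fin n → α => t j) '' U'
                = (fun t : Fin (n+1) → α => t (i.succAbove j)) '' U := by
            intro j; rw [hU'def, Set.image_image]
          have hsum : ∑ j : Fin n, ((fun t : Fin n → α => t j) '' U').ncard
              ≤ ∑ i' : Fin (n+1), ((fun t : Fin (n+1) → α => t i') '' U).ncard := by
            calc ∑ j : Fin n, ((fun t : Fin n → α => t j) '' U').ncard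
                = ∑ j : Fin n,
                    ((fun t : Fin (n+1) → α => t (i.succAbove j)) '' U).ncard :=
                  Finset.sum_congr rfl fun j _ => by rw [himg j]
              _ = ∑ i' ∈ Finset.univ.image i.succAbove,
                    ((fun t : Fin (n+1) → α => t i') '' U).ncard := by
                  rw [Finset.sum_image
                    (fun a _ b _ h => Fin.succAbove_right_injective h)]
              _ ≤ _ := Finset.sum_le_sum_of_subset (Finset.subset_univ _)
          have hmeas : pmeas n U' < M := by
            have h3 : (n+1) * (Fintype.card α + 1)
                = n * (Fintype.card α + 1) + (Fintype.card α + 1) := by ring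
            have h4 : pmeas n U' < pmeas (n+1) U := by
              unfold pmeas
              rw [h3]
              calc n * (Fintype.card α + 1)
                    + ∑ j : Fin n, ((fun t : Fin n → α => t j) '' U').ncard
                  ≤ n * (Fintype.card α + 1)
                    + ∑ i' : Fin (n+1), ((fun t : Fin (n+1) → α => t i') '' U).ncard :=
                    Nat.add_le_add_left hsum _
                _ < n * (Fintype.card α + 1) + (Fintype.card α + 1)
                    + ∑ i' : Fin (n+1), ((fun t : Fin (n+1) → α => t i') '' U).ncard :=
                    Nat.add_lt_add_right
                      (Nat.lt_add_of_pos_right (Nat.succ_pos _)) _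
            exact lt_of_lt_of_le h4 (Nat.lt_succ_iff.mp hlt)
          have hpp := ih n U' hmeas hn1 hU'
          have hP := ppdef_splice (k := n + 1) (l := 0) hpp
            (fun j => Fin.castAdd 0 (i.succAbove j)) []
            (by intro d hd; exact absurd hd List.not_mem_nil)
          refine ⟨_, hP, ?_, ?_⟩
          · intro t ht
            refine ⟨Fin.elim0, fun d hd => absurd hd List.not_mem_nil, ?_⟩
            have heq : (fun j => Fin.append t Fin.elim0 (Fin.castAdd 0 (i.succAbove j)))
                = fun j => t (i.succAbove j) := funext fun j => Fin.append_left _ _ _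
            rw [heq]
            exact ⟨t, ht, rfl⟩
          · rintro ⟨z, -, hmem⟩
            have heq : (fun j => Fin.append s z (Fin.castAdd 0 (i.succAbove j)))
                = fun j => s (i.succAbove j) := funext fun j => Fin.append_left _ _ _
            rw [heq] at hmem
            obtain ⟨t, htU, hteq⟩ := hmem
            obtain ⟨j, hji, htj⟩ := hi t htU
            obtain ⟨j', hj'⟩ := Fin.exists_succAbove_eq hji
            have hcf := congrFun hteq j'
            simp only at hcf
            rw [hj'] at hcf
            exact htj hcf
      · -- some coordinate of s is outside the projection: unary separator
        push_neg at hc1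
        obtain ⟨i, hi⟩ := hc1
        refine ⟨{x : Fin k → α | x i ∈ (fun t : Fin k → α => t i) '' U},
          ppdef_unary i (Or.inl ⟨(fun t : Fin k → α => t i) '' U, rfl⟩),
          fun t ht => Set.mem_image_of_mem _ ht, hi⟩
    -- assemble the intersection of separators
    choose P hPpp hPsub hPnot using sep
    have hLexists : ∃ L : List (Set (Fin k → α)),
        (∀ R ∈ L, PPDefinable (genSet f) k R ∧ U ⊆ R) ∧
        (∀ s, s ∉ U → ∃ R ∈ L, s ∉ R) := by
      refine ⟨((Set.toFinite (Uᶜ)).toFinset.attach.toList).map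
        (fun s => P s.1 ((Set.Finite.mem_toFinset (Set.toFinite (Uᶜ))).1 s.2)), ?_, ?_⟩
      · intro R hR
        obtain ⟨⟨s, hsmem⟩, -, rfl⟩ := List.mem_map.1 hR
        exact ⟨hPpp _ _, hPsub _ _⟩
      · intro s hsU
        have hxc : s ∈ (Set.toFinite (Uᶜ)).toFinset := (Set.Finite.mem_toFinset _).2 hsU
        exact ⟨P s ((Set.Finite.mem_toFinset (Set.toFinite (Uᶜ))).1 hxc),
          List.mem_map.2 ⟨⟨s, hxc⟩, by simp, rfl⟩, hPnot _ _⟩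
    obtain ⟨L, hL1, hL2⟩ := hLexists
    refine ppdef_congr (ppdef_foldr L (fun R hR => (hL1 R hR).1)) ?_
    ext x
    rw [mem_foldr_inter]
    constructor
    · intro hall
      by_contra hxU
      obtain ⟨R, hRL, hxR⟩ := hL2 x hxU
      exact hxR (hall R hRL)
    · intro hxU R hR
      exact (hL1 R hR).2 hxU

/-- Theorem: a relation over a finite conservative minority algebra is
invariant iff it is primitively positively definable from the unary relations,
the subdirect transversal endomorphism graphs, and the subdirect functional
multisorted critical relations over subdirectly irreducible subalgebras. -/
theorem stmt_19 {α : Type*} [Fintype α] (f : α → α → α → α)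
    (hcons : IsConservativeOp f) (hmin : IsMinorityOp f)
    (k : ℕ) (hk : 1 ≤ k) (U : Set (Fin k → α)) :
    PreservesSet f U ↔
      PPDefinable
        {p : Σ r : ℕ, Set (Fin r → α) |
          (∃ X : Set α, p = ⟨1, unaryRel X⟩) ∨
          (∃ (A' B : Set α) (e : α → α), B ⊆ A' ∧ IsSIOn f B ∧
            (∀ x ∈ A', e x ∈ B) ∧ (∀ b ∈ B, ∃ x ∈ A', e x = b) ∧
            (∀ x ∈ A', ∀ y ∈ A', ∀ z ∈ A',
              e (f x y z) = f (e x) (e y) (e z)) ∧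
            (∀ b ∈ B, e b = b) ∧ p = ⟨2, graphRelOn A' e⟩) ∨
          (∃ n : ℕ, 2 ≤ n ∧ ∃ (A : Fin n → Set α) (T : Set (Fin n → α)),
            (∀ i, IsSIOn f (A i)) ∧
            (∀ t ∈ T, ∀ i, t i ∈ A i) ∧
            PreservesSet f T ∧
            (∀ (i : Fin n), ∀ a ∈ A i, ∃ t ∈ T, t i = a) ∧
            (∀ t ∈ T, ∀ t' ∈ T, ∀ i : Fin n,
              (∀ j, j ≠ i → t j = t' j) → t = t') ∧
            (∃ s : Fin n → α, (∀ i, s i ∈ A i) ∧ s ∉ T ∧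
              (∀ S : Set (Fin n → α), (∀ t ∈ S, ∀ i, t i ∈ A i) →
                PreservesSet f S → T ⊂ S → s ∈ S) ∧
              (∀ i : Fin n, ∃ t ∈ T, ∀ j, j ≠ i → t j = s j)) ∧
            p = ⟨n, T⟩)}
        k U := by
  constructor
  · intro hU
    exact main_ppdef hcons hmin (pmeas k U + 1) k U (Nat.lt_succ_self _) hk hU
  · intro hpp
    refine ppdef_preserves f ?_ hpp
    rintro ⟨r, S⟩ hmem
    rcases hmem with ⟨X, hX⟩ | ⟨A', Bb, e, hBA, hSI, hmap, hsurj, hhom, hid, hX⟩ |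
      ⟨n, hn, A, T, hSI, hprod, hpres, hsub, hfun2, hcrit2, hX⟩
    · obtain ⟨h1, h2⟩ := Sigma.mk.inj_iff.1 hX
      subst h1
      have h3 := eq_of_heq h2
      subst h3
      intro t₁ t₂ t₃ h1 h2 h3
      exact cons_mem hcons h1 h2 h3
    · obtain ⟨h1, h2⟩ := Sigma.mk.inj_iff.1 hX
      subst h1
      have h3 := eq_of_heq h2
      subst h3
      intro t₁ t₂ t₃ h1 h2 h3
      obtain ⟨h1a, h1b⟩ := h1
      obtain ⟨h2a, h2b⟩ := h2
      obtain ⟨h3a, h3b⟩ := h3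
      refine ⟨cons_mem hcons h1a h2a h3a, ?_⟩
      show f (t₁ 1) (t₂ 1) (t₃ 1) = e (f (t₁ 0) (t₂ 0) (t₃ 0))
      rw [h1b, h2b, h3b, hhom _ h1a _ h2a _ h3a]
    · obtain ⟨h1, h2⟩ := Sigma.mk.inj_iff.1 hX
      subst h1
      have h3 := eq_of_heq h2
      subst h3
      exact hpres
end
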